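/- arXiv:0812.3099 — 5 statements merged into one kernel-verified Lean document; each statement's English description precedes it below -/
import Mathlib

section
/- A quadratic form over a field of characteristic different from 2 that becomes isotropic over a finite field extension of odd degree is already isotropic over the base field (Springer's theorem). -/
open Polynomial Matrix TensorProduct

/-- Anisotropy of the quadratic form attached to a matrix. -/
def MatAniso {m : ℕ} (A : Type) [CommRing A] (N : Matrix (Fin m) (Fin m) A) : Prop :=
  ∀ c : Fin m → A, c ⬝ᵥ N.mulVec c = 0 → c = 0

lemma map_form {m : ℕ} {A B : Type} [CommRing A] [CommRing B] (σ : A →+* B)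
    (N : Matrix (Fin m) (Fin m) A) (c : Fin m → A) :
    σ (c ⬝ᵥ N.mulVec c) = (σ ∘ c) ⬝ᵥ (N.map σ).mulVec (σ ∘ c) := by
  simp [Matrix.mulVec, dotProduct, map_sum, Finset.mul_sum, Matrix.map]

/-- Transfer anisotropy along a bijective ring hom commuting with the structure maps. -/
lemma MatAniso.transfer {m : ℕ} {k A B : Type} [Field k] [CommRing A] [CommRing B]
    [Algebra k A] [Algebra k B] (M : Matrix (Fin m) (Fin m) k)
    (σ : A →+* B) (hbij : Function.Bijective σ)
    (hcomm : ∀ x : k, σ (algebraMap k A x) = algebraMap k B x)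
    (h : MatAniso A (M.map (algebraMap k A))) : MatAniso B (M.map (algebraMap k B)) := by
  intro c hc
  choose c' hc' using fun i => hbij.2 (c i)
  have hcc : σ ∘ c' = c := funext hc'
  have h1 : σ (c' ⬝ᵥ (M.map (algebraMap k A)).mulVec c') = 0 := by
    rw [map_form σ _ c', hcc, Matrix.map_map]
    rw [show (⇑σ ∘ ⇑(algebraMap k A)) = ⇑(algebraMap k B) from funext hcomm]
    exact hc
  have h2 : c' ⬝ᵥ (M.map (algebraMap k A)).mulVec c' = 0 := by
    apply hbij.1; rw [h1, map_zero]
  have := h c' h2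
  funext i
  rw [← hc' i, this]; simp

/-- Any polynomial of odd degree over a field has an irreducible factor of odd degree. -/
lemma exists_odd_irreducible_factor {k : Type} [Field k] :
    ∀ (g : k[X]), Odd g.natDegree → ∃ h : k[X], Irreducible h ∧ Odd h.natDegree ∧ h ∣ g := by
  suffices H : ∀ (n : ℕ) (g : k[X]), g.natDegree = n → Odd g.natDegree →
      ∃ h : k[X], Irreducible h ∧ Odd h.natDegree ∧ h ∣ g by
    exact fun g hg => H g.natDegree g rfl hg
  intro n
  induction n using Nat.strong_induction_on with
  | _ n IH =>
    intro g hn hg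
    subst hn
    by_cases hi : Irreducible g
    · exact ⟨g, hi, hg, dvd_refl g⟩
    · have hg0 : g ≠ 0 := by rintro rfl; simp [Nat.odd_iff] at hg
      have hgu : ¬ IsUnit g := by
        intro hu
        rw [Polynomial.natDegree_eq_zero_of_isUnit hu] at hg
        simp [Nat.odd_iff] at hg
      rw [irreducible_iff] at hi
      push_neg at hi
      obtain ⟨u, v, huv, hu, hv⟩ := hi hgu
      have hu0 : u ≠ 0 := fun h => hg0 (by simp [huv, h])
      have hv0 : v ≠ 0 := fun h => hg0 (by simp [huv, h])
      have hdeg : u.natDegree + v.natDegree = g.natDegree := by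
        rw [huv, natDegree_mul hu0 hv0]
      have hnd : ∀ w : k[X], w ≠ 0 → ¬ IsUnit w → 1 ≤ w.natDegree := by
        intro w hw0 hwu
        by_contra hlt
        push_neg at hlt
        obtain ⟨a, ha⟩ := Polynomial.natDegree_eq_zero.mp (Nat.lt_one_iff.mp hlt)
        have ha0 : a ≠ 0 := by rintro rfl; simp at ha; exact hw0 ha.symm
        exact hwu (ha ▸ Polynomial.isUnit_C.mpr (isUnit_iff_ne_zero.mpr ha0))
      have hu1 := hnd u hu0 hu
      have hv1 := hnd v hv0 hv
      rcases Nat.even_or_odd u.natDegree with he | ho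
      · have hvodd : Odd v.natDegree := by
          rcases Nat.even_or_odd v.natDegree with h2 | h2
          · exfalso
            rw [Nat.odd_iff, ← hdeg, Nat.add_mod, Nat.even_iff.mp he, Nat.even_iff.mp h2] at hg
            simp at hg
          · exact h2
        obtain ⟨h, h1, h2, h3⟩ := IH v.natDegree (by omega) v rfl hvodd
        exact ⟨h, h1, h2, h3.trans (Dvd.intro_left u huv.symm)⟩
      · obtain ⟨h, h1, h2, h3⟩ := IH u.natDegree (by omega) u rfl ho
        exact ⟨h, h1, h2, h3.trans ⟨v, huv⟩⟩

lemma coeff_mul_of_natDegree_le' {k : Type} [Field k] {u v : k[X]} {e : ℕ}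
    (hu : u.natDegree ≤ e) (hv : v.natDegree ≤ e) :
    (u * v).coeff (e + e) = u.coeff e * v.coeff e := by
  rw [Polynomial.coeff_mul]
  rw [Finset.sum_eq_single (e, e)]
  · intro b hb hne
    rw [Finset.HasAntidiagonal.mem_antidiagonal] at hb
    rcases lt_or_ge e b.1 with h | h
    · rw [Polynomial.coeff_eq_zero_of_natDegree_lt (lt_of_le_of_lt hu h), zero_mul]
    · have hb2 : e < b.2 := by
        rcases lt_or_eq_of_le h with h' | h'
        · omega
        · exfalso; apply hne; rw [Prod.ext_iff]; constructor <;> omega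
      rw [Polynomial.coeff_eq_zero_of_natDegree_lt (lt_of_le_of_lt hv hb2), mul_zero]
  · intro h
    exact absurd (by simp : ((e, e) : ℕ × ℕ) ∈ Finset.HasAntidiagonal.antidiagonal (e + e)) h

lemma mk_form {m : ℕ} {k : Type} [Field k] (f : k[X]) (M : Matrix (Fin m) (Fin m) k)
    (p : Fin m → k[X]) :
    ((AdjoinRoot.mk f) ∘ p) ⬝ᵥ (M.map (algebraMap k (AdjoinRoot f))).mulVec ((AdjoinRoot.mk f) ∘ p)
      = AdjoinRoot.mk f (p ⬝ᵥ (M.map Polynomial.C).mulVec p) := by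
  rw [map_form (AdjoinRoot.mk f) (M.map Polynomial.C) p, Matrix.map_map]
  have : (⇑(AdjoinRoot.mk f) ∘ ⇑(Polynomial.C : k →+* k[X])) = ⇑(algebraMap k (AdjoinRoot f)) := by
    funext x
    rfl
  rw [this]

/-- The core simple-extension step of Springer's theorem. -/
lemma adjoinRoot_core {m : ℕ} (k : Type) [Field k] (f : k[X]) (hirr : Irreducible f)
    (hmon : f.Monic) (hodd : Odd f.natDegree)
    (M : Matrix (Fin m) (Fin m) k) (hM : MatAniso k M)
    (IH : ∀ (F : Type) [Field F] [Algebra k F] [FiniteDimensional k F],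
        Odd (Module.finrank k F) → Module.finrank k F < f.natDegree →
        MatAniso F (M.map (algebraMap k F))) :
    MatAniso (AdjoinRoot f) (M.map (algebraMap k (AdjoinRoot f))) := by
  classical
  haveI : Fact (Irreducible f) := ⟨hirr⟩
  have hd1 : 1 ≤ f.natDegree := hirr.natDegree_pos
  by_contra hcon
  unfold MatAniso at hcon
  push_neg at hcon
  obtain ⟨c, hc0, hcne⟩ := hcon
  -- short representatives
  have hrep : ∀ z : AdjoinRoot f, ∃ p : k[X],
      AdjoinRoot.mk f p = z ∧ p.natDegree < f.natDegree := by
    intro z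
    obtain ⟨p, hp⟩ := AdjoinRoot.mk_surjective z
    refine ⟨p %ₘ f, ?_, ?_⟩
    · rw [Polynomial.modByMonic_eq_sub_mul_div _ f, map_sub, _root_.map_mul,
        AdjoinRoot.mk_self, zero_mul, sub_zero, hp]
    · by_cases h0 : p %ₘ f = 0
      · rw [h0, Polynomial.natDegree_zero]; omega
      · exact Polynomial.natDegree_lt_natDegree h0 (Polynomial.degree_modByMonic_lt p hmon)
  have hex : ∃ e : ℕ, ∃ p : Fin m → k[X],
      (p ≠ 0 ∧ f ∣ (p ⬝ᵥ (M.map Polynomial.C).mulVec p) ∧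
        ∀ i, (p i).natDegree < f.natDegree) ∧
      (Finset.univ.sup fun i => (p i).natDegree) ≤ e := by
    choose p hp hdeg using fun i => hrep (c i)
    have hmkp : (AdjoinRoot.mk f) ∘ p = c := funext hp
    refine ⟨_, p, ⟨?_, ?_, hdeg⟩, le_refl _⟩
    · rintro rfl
      apply hcne
      funext i
      rw [← hp i]
      simp
    · rw [← AdjoinRoot.mk_eq_zero, ← mk_form f M p, hmkp]
      exact hc0
  obtain ⟨p, ⟨hp0, hdvd, hdlt⟩, hsup⟩ := Nat.find_spec hex
  obtain ⟨e, he⟩ : ∃ e, (Finset.univ.sup fun i => (p i).natDegree) = e := ⟨_, rfl⟩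
  rw [he] at hsup
  have hdege : ∀ i, (p i).natDegree ≤ e := fun i => he ▸ Finset.le_sup (f := fun i => (p i).natDegree) (Finset.mem_univ i)
  -- index of maximal degree among nonzero entries
  obtain ⟨j, hj⟩ : ∃ i, p i ≠ 0 := Function.ne_iff.mp hp0
  obtain ⟨i₀, hi₀mem, hi₀max⟩ := Finset.exists_max_image
    (Finset.univ.filter fun i => p i ≠ 0) (fun i => (p i).natDegree)
    ⟨j, Finset.mem_filter.mpr ⟨Finset.mem_univ j, hj⟩⟩
  have hpi₀ : p i₀ ≠ 0 := (Finset.mem_filter.mp hi₀mem).2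
  have he_eq : (p i₀).natDegree = e := by
    refine le_antisymm (hdege i₀) ?_
    rw [← he]
    refine Finset.sup_le fun i _ => ?_
    by_cases h0 : p i = 0
    · rw [h0, Polynomial.natDegree_zero]; exact Nat.zero_le _
    · exact hi₀max i (Finset.mem_filter.mpr ⟨Finset.mem_univ i, h0⟩)
  have hcc0 : (p i₀).coeff e ≠ 0 := by
    have h1 : (p i₀).coeff e = (p i₀).leadingCoeff := by
      rw [Polynomial.leadingCoeff, he_eq]
    rw [h1]
    exact Polynomial.leadingCoeff_ne_zero.mpr hpi₀
  -- expand the polynomial form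
  have hPp : p ⬝ᵥ (M.map Polynomial.C).mulVec p
      = ∑ i, p i * ∑ j, Polynomial.C (M i j) * p j := by
    simp [dotProduct, Matrix.mulVec]
  have inner_deg : ∀ i, (∑ j, Polynomial.C (M i j) * p j).natDegree ≤ e := fun i =>
    Polynomial.natDegree_sum_le_of_forall_le _ _ fun j _ =>
      (Polynomial.natDegree_C_mul_le _ _).trans (hdege j)
  have hcoeff : (p ⬝ᵥ (M.map Polynomial.C).mulVec p).coeff (e + e)
      = (fun i => (p i).coeff e) ⬝ᵥ M.mulVec (fun i => (p i).coeff e) := by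
    rw [hPp, Polynomial.finset_sum_coeff]
    have step1 : ∀ i : Fin m, (p i * ∑ j, Polynomial.C (M i j) * p j).coeff (e + e)
        = (p i).coeff e * ∑ j, M i j * (p j).coeff e := by
      intro i
      rw [coeff_mul_of_natDegree_le' (hdege i) (inner_deg i)]
      congr 1
      rw [Polynomial.finset_sum_coeff]
      exact Finset.sum_congr rfl fun j _ => by rw [Polynomial.coeff_C_mul]
    rw [Finset.sum_congr rfl fun i _ => step1 i]
    simp [dotProduct, Matrix.mulVec]
  have hcne' : (fun i => (p i).coeff e) ⬝ᵥ M.mulVec (fun i => (p i).coeff e) ≠ 0 := by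
    intro h0
    exact hcc0 (congrFun (hM _ h0) i₀)
  obtain ⟨g, hg⟩ := hdvd
  have hf0 : f ≠ 0 := hmon.ne_zero
  have hg0 : g ≠ 0 := by
    rintro rfl
    rw [mul_zero] at hg
    apply hcne'
    rw [← hcoeff, hg, Polynomial.coeff_zero]
  have hPdeg_le : (p ⬝ᵥ (M.map Polynomial.C).mulVec p).natDegree ≤ e + e := by
    rw [hPp]
    exact Polynomial.natDegree_sum_le_of_forall_le _ _ fun i _ =>
      Polynomial.natDegree_mul_le.trans (add_le_add (hdege i) (inner_deg i))
  have hPdeg_ge : e + e ≤ (p ⬝ᵥ (M.map Polynomial.C).mulVec p).natDegree :=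
    Polynomial.le_natDegree_of_ne_zero (hcoeff ▸ hcne')
  have hsumdeg : f.natDegree + g.natDegree = e + e := by
    rw [← le_antisymm hPdeg_le hPdeg_ge, hg, Polynomial.natDegree_mul hf0 hg0]
  have he_lt_d : e < f.natDegree := by
    rw [← he]
    exact (Finset.sup_lt_iff (show (⊥ : ℕ) < f.natDegree by
      simpa using (show 0 < f.natDegree from hd1))).mpr fun i _ => hdlt i
  have he1 : 1 ≤ e := by omega
  have hgodd : Odd g.natDegree := by
    rcases hodd with ⟨t, ht⟩
    rw [Nat.odd_iff]
    omega
  obtain ⟨h, hhirr, hhodd, hhdvd⟩ := exists_odd_irreducible_factor g hgodd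
  have hh0 : h ≠ 0 := hhirr.ne_zero
  have hhdeg_le : h.natDegree ≤ g.natDegree := Polynomial.natDegree_le_of_dvd hhdvd hg0
  have hh1 : 1 ≤ h.natDegree := hhirr.natDegree_pos
  by_cases hcase : ∀ i, h ∣ p i
  · -- all entries divisible by h: contradict minimality
    choose r hr using hcase
    have hpr : p = h • r := funext fun i => by
      rw [Pi.smul_apply, smul_eq_mul, ← hr i]
    have hPfactor : p ⬝ᵥ (M.map Polynomial.C).mulVec p
        = h * h * (r ⬝ᵥ (M.map Polynomial.C).mulVec r) := by
      rw [hpr, Matrix.mulVec_smul, dotProduct_smul, smul_dotProduct]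
      simp only [smul_eq_mul]
      ring
    have hfr : f ∣ r ⬝ᵥ (M.map Polynomial.C).mulVec r := by
      have hfh : ¬ f ∣ h := by
        intro hdv
        have := Polynomial.natDegree_le_of_dvd hdv hh0
        omega
      have hprime := hirr.prime
      have h1 : f ∣ h * (h * (r ⬝ᵥ (M.map Polynomial.C).mulVec r)) := by
        rw [← mul_assoc, ← hPfactor]
        exact ⟨g, hg⟩
      rcases hprime.2.2 _ _ h1 with h2 | h2
      · exact absurd h2 hfh
      · rcases hprime.2.2 _ _ h2 with h3 | h3
        · exact absurd h3 hfh
        · exact h3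
    have hr0 : r ≠ 0 := by
      rintro rfl
      apply hp0
      rw [hpr]
      simp
    have hrdeg : ∀ i, (r i).natDegree ≤ e - 1 := by
      intro i
      by_cases h0 : r i = 0
      · rw [h0, Polynomial.natDegree_zero]; omega
      · have hpi0 := hdege i
        rw [hr i, Polynomial.natDegree_mul hh0 h0] at hpi0
        omega
    have hlt : e - 1 < Nat.find hex := by omega
    exact Nat.find_min hex hlt ⟨r, ⟨hr0, hfr, fun i => lt_of_le_of_lt (hrdeg i) (by omega)⟩,
      Finset.sup_le fun i _ => hrdeg i⟩
  · -- some entry not divisible: isotropic vector over AdjoinRoot h, degree < d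
    push_neg at hcase
    obtain ⟨i₁, hi₁⟩ := hcase
    haveI : Fact (Irreducible h) := ⟨hhirr⟩
    haveI : FiniteDimensional k (AdjoinRoot h) :=
      Module.Finite.of_basis (AdjoinRoot.powerBasis hh0).basis
    have hrank : Module.finrank k (AdjoinRoot h) = h.natDegree := by
      rw [(AdjoinRoot.powerBasis hh0).finrank, AdjoinRoot.powerBasis_dim]
    have hFan := IH (AdjoinRoot h) (by rw [hrank]; exact hhodd) (by rw [hrank]; omega)
    have hiso2 : ((AdjoinRoot.mk h) ∘ p) ⬝ᵥ
        (M.map (algebraMap k (AdjoinRoot h))).mulVec ((AdjoinRoot.mk h) ∘ p) = 0 := by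
      rw [mk_form h M p, AdjoinRoot.mk_eq_zero, hg]
      exact Dvd.dvd.mul_left hhdvd f
    have hne : (AdjoinRoot.mk h) ∘ p ≠ 0 := by
      intro h0
      apply hi₁
      rw [← AdjoinRoot.mk_eq_zero]
      exact congrFun h0 i₁
    exact hne (hFan _ hiso2)

/-- Springer's theorem for matrices. -/
theorem mat_springer : ∀ (n : ℕ), Odd n →
    ∀ (k L : Type) [Field k] [Field L] [Algebra k L] [FiniteDimensional k L],
      Module.finrank k L = n → ∀ (m : ℕ) (M : Matrix (Fin m) (Fin m) k),
        MatAniso k M → MatAniso L (M.map (algebraMap k L)) := by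
  intro n
  induction n using Nat.strong_induction_on with
  | _ n IHn =>
    intro hodd k L _ _ _ _ hrank m M hM
    by_cases hn1 : n = 1
    · -- degree one: the algebra map is bijective
      subst hn1
      have hsurj : Function.Surjective (algebraMap k L) := by
        intro x
        have hbot : (⊥ : Subalgebra k L) = ⊤ :=
          Subalgebra.bot_eq_top_iff_finrank_eq_one.mpr hrank
        have : x ∈ (⊥ : Subalgebra k L) := hbot.symm ▸ Algebra.mem_top
        exact Algebra.mem_bot.mp this
      have hMk : MatAniso k (M.map (algebraMap k k)) := by
        rwa [show M.map (algebraMap k k) = M by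
          rw [Algebra.algebraMap_self]; exact Matrix.map_id M]
      exact MatAniso.transfer (k := k) (A := k) (B := L) M (algebraMap k L)
        ⟨(algebraMap k L).injective, hsurj⟩ (fun x => by rw [Algebra.algebraMap_self]; rfl) hMk
    · -- degree > 1: split off a simple subextension
      have hn0 : n ≠ 0 := by rintro rfl; simp [Nat.odd_iff] at hodd
      obtain ⟨θ, hθ⟩ : ∃ θ : L, θ ∉ Set.range (algebraMap k L) := by
        by_contra hall
        push_neg at hall
        apply hn1
        rw [← hrank]
        rw [← Subalgebra.bot_eq_top_iff_finrank_eq_one]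
        ext x
        simp only [Algebra.mem_top, iff_true, Algebra.mem_bot]
        exact hall x
      have hθint : IsIntegral k θ := Algebra.IsIntegral.isIntegral θ
      set K := IntermediateField.adjoin k ({θ} : Set L) with hK
      haveI : FiniteDimensional k ↥K := FiniteDimensional.left k ↥K L
      haveI : FiniteDimensional ↥K L := FiniteDimensional.right k ↥K L
      have hmul : Module.finrank k ↥K * Module.finrank ↥K L = n := by
        rw [← hrank]; exact Module.finrank_mul_finrank k ↥K L
      have hoddK : Odd (Module.finrank k ↥K) ∧ Odd (Module.finrank ↥K L) := by
        rw [← Nat.odd_mul, hmul]; exact hodd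
      have hKpos : 0 < Module.finrank k ↥K := Module.finrank_pos
      have hLpos : 0 < Module.finrank ↥K L := Module.finrank_pos
      have hK1 : Module.finrank k ↥K ≠ 1 := by
        intro h1
        rw [IntermediateField.finrank_eq_one_iff] at h1
        apply hθ
        have : θ ∈ K := IntermediateField.mem_adjoin_simple_self k θ
        rw [h1, IntermediateField.mem_bot] at this
        exact this
      have hdn : Module.finrank k ↥K ≤ n := by
        rw [← hmul]; exact Nat.le_mul_of_pos_right _ hLpos
      -- Step 1: anisotropy over K via the simple extension core
      have hfdeg : (minpoly k θ).natDegree = Module.finrank k ↥K :=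
        (IntermediateField.adjoin.finrank hθint).symm
      have hcore := adjoinRoot_core k (minpoly k θ) (minpoly.irreducible hθint)
        (minpoly.monic hθint) (by rw [hfdeg]; exact hoddK.1) M hM
        (fun F _ _ _ hoddF hltF =>
          IHn (Module.finrank k F) (lt_of_lt_of_le (hfdeg ▸ hltF) hdn) hoddF k F rfl m M hM)
      have hKan : MatAniso ↥K (M.map (algebraMap k ↥K)) := by
        refine MatAniso.transfer M
          (IntermediateField.adjoinRootEquivAdjoin k hθint).toAlgHom.toRingHom
          (IntermediateField.adjoinRootEquivAdjoin k hθint).bijective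
          (fun x => (IntermediateField.adjoinRootEquivAdjoin k hθint).commutes x) hcore
      -- Step 2: anisotropy over L by induction
      have hlt2 : Module.finrank ↥K L < n := by
        have h2 : 2 ≤ Module.finrank k ↥K := by omega
        calc Module.finrank ↥K L < 2 * Module.finrank ↥K L := by omega
          _ ≤ Module.finrank k ↥K * Module.finrank ↥K L := Nat.mul_le_mul_right _ h2
          _ = n := hmul
      have hfin := IHn (Module.finrank ↥K L) hlt2 hoddK.2 ↥K L rfl m
        (M.map (algebraMap k ↥K)) hKan
      rwa [Matrix.map_map,
        show (⇑(algebraMap ↥K L) ∘ ⇑(algebraMap k ↥K)) = ⇑(algebraMap k L) from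
          funext fun x => (IsScalarTower.algebraMap_apply k ↥K L x).symm] at hfin

/-- **Springer's theorem.** -/
theorem springer_odd_degree_descent
    (k : Type) [Field k] [Invertible (2 : k)]
    (L : Type) [Field L] [Algebra k L] [FiniteDimensional k L]
    (hodd : Odd (Module.finrank k L))
    (V : Type) [AddCommGroup V] [Module k V] [FiniteDimensional k V]
    (q : QuadraticForm k V)
    (hq : q.polarBilin.Nondegenerate)
    (hiso : ¬ (q.baseChange L).Anisotropic) :
    ¬ q.Anisotropic := by
  intro han
  apply hiso
  haveI : Invertible (2 : L) := (Invertible.map (algebraMap k L) 2).copy 2 (map_ofNat _ _).symm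
  have h2k : (2 : k) ≠ 0 := Invertible.ne_zero 2
  set m := Module.finrank k V with hm
  set b : Module.Basis (Fin m) k V := Module.finBasis k V with hb
  set M : Matrix (Fin m) (Fin m) k :=
    Matrix.of fun i j => QuadraticMap.polar q (b i) (b j) with hMdef
  -- the matrix form is anisotropic over k
  have hMan : MatAniso k M := by
    intro c hc
    have hexp : c ⬝ᵥ M.mulVec c
        = QuadraticMap.polarBilin q (∑ i, c i • b i) (∑ j, c j • b j) := by
      calc c ⬝ᵥ M.mulVec c = ∑ i, ∑ j, c i * (M i j * c j) := by
            simp [dotProduct, Matrix.mulVec, Finset.mul_sum]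
        _ = ∑ i, ∑ j, c i * (c j * QuadraticMap.polar q (b i) (b j)) := by
            refine Finset.sum_congr rfl fun i _ => Finset.sum_congr rfl fun j _ => ?_
            rw [hMdef]
            simp only [Matrix.of_apply]
            ring
        _ = QuadraticMap.polarBilin q (∑ i, c i • b i) (∑ j, c j • b j) := by
            symm
            simp only [map_sum, LinearMap.sum_apply, LinearMap.map_smul, LinearMap.smul_apply,
              smul_eq_mul]
            rw [Finset.sum_comm]
            refine Finset.sum_congr rfl fun i _ => Finset.sum_congr rfl fun j _ => ?_
            simp only [QuadraticMap.polarBilin_apply_apply]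
    have hpolar : QuadraticMap.polar q (∑ i, c i • b i) (∑ i, c i • b i) = 0 := by
      have : QuadraticMap.polarBilin q (∑ i, c i • b i) (∑ j, c j • b j) = 0 := by
        rw [← hexp, hc]
      exact this
    have hq0 : q (∑ i, c i • b i) = 0 := by
      have h1 : (2 : k) * q (∑ i, c i • b i) = 0 := by
        have h2 := QuadraticMap.polar_self q (∑ i, c i • b i)
        rw [hpolar, two_smul] at h2
        rw [two_mul]
        exact h2.symm
      rcases mul_eq_zero.mp h1 with h | h
      · exact absurd h h2k
      · exact h
    have hv0 : (∑ i, c i • b i) = 0 := han _ hq0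
    funext i
    exact (Fintype.linearIndependent_iff.mp b.linearIndependent) c hv0 i
  -- transfer to L
  have hLan := mat_springer (Module.finrank k L) hodd k L rfl m M hMan
  -- conclude anisotropy of the base change
  intro x hx
  set bL : Module.Basis (Fin m) L (L ⊗[k] V) := b.baseChange L with hbL
  set c : Fin m → L := fun i => bL.repr x i with hc
  have hxsum : ∑ i, c i • bL i = x := bL.sum_repr x
  have hform : c ⬝ᵥ (M.map (algebraMap k L)).mulVec c = 0 := by
    have hpolar0 : QuadraticMap.polarBilin (q.baseChange L) x x = 0 := by
      have h2 := QuadraticMap.polar_self (q.baseChange L) x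
      rw [hx] at h2
      simpa using h2
    rw [QuadraticForm.polarBilin_baseChange] at hpolar0
    have hexp : c ⬝ᵥ (M.map (algebraMap k L)).mulVec c
        = (LinearMap.BilinForm.baseChange L (QuadraticMap.polarBilin q)) x x := by
      calc c ⬝ᵥ (M.map (algebraMap k L)).mulVec c
          = ∑ i, ∑ j, c i * ((M.map (algebraMap k L)) i j * c j) := by
            simp [dotProduct, Matrix.mulVec, Finset.mul_sum]
        _ = ∑ i, ∑ j, c i * (c j * (algebraMap k L (QuadraticMap.polar q (b i) (b j)))) := by
            refine Finset.sum_congr rfl fun i _ => Finset.sum_congr rfl fun j _ => ?_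
            rw [hMdef]
            simp only [Matrix.map_apply, Matrix.of_apply]
            ring
        _ = (LinearMap.BilinForm.baseChange L (QuadraticMap.polarBilin q)) x x := by
            symm
            rw [← hxsum]
            simp only [map_sum, LinearMap.sum_apply, LinearMap.map_smul, LinearMap.smul_apply,
              smul_eq_mul, hbL, Module.Basis.baseChange_apply,
              LinearMap.BilinForm.baseChange_tmul, mul_one, Algebra.smul_def]
            rw [Finset.sum_comm]
            refine Finset.sum_congr rfl fun i _ => Finset.sum_congr rfl fun j _ => ?_
            ring_nf
            simp only [QuadraticMap.polarBilin_apply_apply]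
    rw [hexp]
    exact hpolar0
  have hc0 : c = 0 := hLan c hform
  rw [← hxsum, hc0]
  simp
end

section
/- Let A be a complete discrete valuation ring with fraction field K and residue field k of characteristic ≠ 2, with uniformizer π. Let q = q₁ ⊥ π·q₂ where q₁, q₂ are nondegenerate diagonal quadratic forms with unit coefficients in A. Then q is isotropic over K if and only if the reduction of q₁ or the reduction of q₂ is isotropic over k. -/
open IsLocalRing Polynomial

private lemma springer_exists_sqrt {A : Type} [CommRing A] [IsLocalRing A]
    [HenselianRing A (maximalIdeal A)]
    (hchar : (2 : ResidueField A) ≠ 0)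
    (c b : A) (hb : IsUnit b) (h : residue A c = residue A b ^ 2) :
    ∃ t : A, t * t = c ∧ IsUnit t := by
  classical
  set f : A[X] := X ^ 2 - C c with hf
  have hmonic : f.Monic := monic_X_pow_sub_C c (by norm_num)
  have heval : f.eval b ∈ maximalIdeal A := by
    have h0 : residue A (f.eval b) = 0 := by
      simp only [hf, eval_sub, eval_pow, eval_X, eval_C, map_sub, map_pow, h, sub_self]
    exact Ideal.Quotient.eq_zero_iff_mem.mp h0
  have hder : IsUnit (Ideal.Quotient.mk (maximalIdeal A) (f.derivative.eval b)) := by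
    have hd : f.derivative = C 2 * X := by
      simp [hf]
      rw [map_ofNat C 2]; ring
    show IsUnit (residue A (f.derivative.eval b))
    rw [hd]
    simp only [eval_mul, eval_C, eval_X, eval_ofNat, map_mul, map_ofNat]
    exact isUnit_iff_ne_zero.mpr
      (mul_ne_zero hchar ((residue_ne_zero_iff_isUnit b).mpr hb))
  obtain ⟨t, ht, htb⟩ := HenselianRing.is_henselian (I := maximalIdeal A) f hmonic b heval hder
  refine ⟨t, ?_, ?_⟩
  · have : t ^ 2 - c = 0 := by simpa [hf] using ht
    rw [← sq]
    linear_combination this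
  · rw [← residue_ne_zero_iff_isUnit]
    have : residue A t = residue A b := by
      have := Ideal.Quotient.eq_zero_iff_mem.mpr htb
      rw [map_sub, sub_eq_zero] at this
      exact this
    rw [this]
    exact (residue_ne_zero_iff_isUnit b).mpr hb

private lemma springer_lift_isotropic {A : Type} [CommRing A] [IsLocalRing A]
    [HenselianRing A (maximalIdeal A)]
    (hchar : (2 : ResidueField A) ≠ 0)
    {n : ℕ} (v : Fin n → Aˣ) (xb : Fin n → ResidueField A) (hxb : xb ≠ 0)
    (hsum : ∑ i, residue A (v i) * xb i ^ 2 = 0) :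
    ∃ x : Fin n → A, (∃ i, IsUnit (x i)) ∧ ∑ i, (v i : A) * x i ^ 2 = 0 := by
  classical
  choose x₀ hx₀ using fun i => Ideal.Quotient.mk_surjective (xb i)
  have hx₀' : ∀ i, residue A (x₀ i) = xb i := hx₀
  obtain ⟨i₀, hi₀⟩ : ∃ i, xb i ≠ 0 := by
    by_contra h; push_neg at h; exact hxb (funext h)
  set S : A := ∑ i ∈ Finset.univ.erase i₀, (v i : A) * x₀ i ^ 2 with hS
  have hx₀u : IsUnit (x₀ i₀) := by
    rw [← residue_ne_zero_iff_isUnit, hx₀' i₀]; exact hi₀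
  have hsplit : (∑ i, (v i : A) * x₀ i ^ 2) = (v i₀ : A) * x₀ i₀ ^ 2 + S :=
    (Finset.add_sum_erase _ _ (Finset.mem_univ i₀)).symm
  have hmap : residue A ((v i₀ : A) * x₀ i₀ ^ 2 + S) = 0 := by
    rw [← hsplit, map_sum]
    simp only [map_mul, map_pow, hx₀']
    exact hsum
  have hSres : residue A S = -(residue A ((v i₀ : A)) * residue A (x₀ i₀) ^ 2) := by
    rw [map_add, map_mul, map_pow] at hmap
    linear_combination hmap
  set c : A := (↑(v i₀)⁻¹ : A) * (-S) with hc_def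
  have hvv : residue A (↑(v i₀)⁻¹ : A) * residue A ((v i₀ : A)) = 1 := by
    rw [← map_mul, Units.inv_mul, map_one]
  have hc : residue A c = residue A (x₀ i₀) ^ 2 := by
    rw [hc_def, map_mul, map_neg, hSres, neg_neg, ← mul_assoc, hvv, one_mul]
  obtain ⟨t, ht2, htu⟩ := springer_exists_sqrt hchar c (x₀ i₀) hx₀u hc
  refine ⟨Function.update x₀ i₀ t, ⟨i₀, by simpa using htu⟩, ?_⟩
  rw [← Finset.add_sum_erase _ _ (Finset.mem_univ i₀)]
  have herase : ∑ i ∈ Finset.univ.erase i₀, (v i : A) * (Function.update x₀ i₀ t i) ^ 2 = S :=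
    Finset.sum_congr rfl fun i hi => by
      rw [Function.update_of_ne (Finset.ne_of_mem_erase hi)]
  rw [herase, Function.update_self]
  have hterm : (v i₀ : A) * t ^ 2 = -S := by
    rw [sq, ht2, hc_def, ← mul_assoc, Units.mul_inv, one_mul]
  rw [hterm, neg_add_cancel]

private lemma springer_fwd_aux {A : Type} [CommRing A] [IsDomain A] [IsDiscreteValuationRing A]
    {π : A} (hπ : Irreducible π) {r s : ℕ} (u : Fin r → Aˣ) (w : Fin s → Aˣ) :
    ∀ (n : ℕ) (a : Fin r → A) (b : Fin s → A),
      ((∃ i, ¬ π ^ n ∣ a i) ∨ (∃ j, ¬ π ^ n ∣ b j)) →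
      (∑ i, (u i : A) * a i ^ 2) + π * ∑ j, (w j : A) * b j ^ 2 = 0 →
      ((∃ x : Fin r → ResidueField A, x ≠ 0 ∧ ∑ i, residue A (u i) * x i ^ 2 = 0) ∨
       (∃ y : Fin s → ResidueField A, y ≠ 0 ∧ ∑ j, residue A (w j) * y j ^ 2 = 0)) := by
  intro n
  induction n with
  | zero =>
    intro a b h _
    rcases h with ⟨i, hi⟩ | ⟨j, hj⟩
    · exact absurd (by simp) hi
    · exact absurd (by simp) hj
  | succ n ih =>
    intro a b hnd heq
    have hπ0 : residue A π = 0 :=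
      Ideal.Quotient.eq_zero_iff_mem.mpr ((mem_maximalIdeal π).mpr hπ.not_isUnit)
    by_cases hA : ∃ i, IsUnit (a i)
    · left
      obtain ⟨i₀, hi₀⟩ := hA
      refine ⟨fun i => residue A (a i), ?_, ?_⟩
      · intro h0
        exact (residue_ne_zero_iff_isUnit _).mpr hi₀ (congrFun h0 i₀)
      · have := congrArg (residue A) heq
        simp only [map_add, map_mul, map_sum, map_pow, map_zero, hπ0, zero_mul, add_zero] at this
        exact this
    · push_neg at hA
      have hdvd : ∀ i, π ∣ a i := fun i => by
        have : a i ∈ maximalIdeal A := (mem_maximalIdeal _).mpr (hA i)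
        rwa [hπ.maximalIdeal_eq, Ideal.mem_span_singleton] at this
      by_cases hB : ∃ j, IsUnit (b j)
      · right
        obtain ⟨j₀, hj₀⟩ := hB
        have h2 : π ^ 2 ∣ ∑ i, (u i : A) * a i ^ 2 :=
          Finset.dvd_sum fun i _ => Dvd.dvd.mul_left (pow_dvd_pow_of_dvd (hdvd i) 2) _
        have h3 : π * π ∣ π * ∑ j, (w j : A) * b j ^ 2 := by
          have : π * ∑ j, (w j : A) * b j ^ 2 = -(∑ i, (u i : A) * a i ^ 2) := by
            linear_combination heq
          rw [this, dvd_neg, ← sq]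
          exact h2
        obtain ⟨t, htt⟩ := (mul_dvd_mul_iff_left hπ.ne_zero).mp h3
        refine ⟨fun j => residue A (b j), ?_, ?_⟩
        · intro h0
          exact (residue_ne_zero_iff_isUnit _).mpr hj₀ (congrFun h0 j₀)
        · have := congrArg (residue A) htt
          simp only [map_sum, map_mul, map_pow, hπ0, zero_mul] at this
          exact this
      · push_neg at hB
        have hdvdb : ∀ j, π ∣ b j := fun j => by
          have : b j ∈ maximalIdeal A := (mem_maximalIdeal _).mpr (hB j)
          rwa [hπ.maximalIdeal_eq, Ideal.mem_span_singleton] at this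
        choose a' ha' using hdvd
        choose b' hb' using hdvdb
        have heq' : (∑ i, (u i : A) * a' i ^ 2) + π * ∑ j, (w j : A) * b' j ^ 2 = 0 := by
          have hne : (π ^ 2 : A) ≠ 0 := pow_ne_zero _ hπ.ne_zero
          apply mul_left_cancel₀ hne
          rw [mul_zero, ← heq]
          have e1 : ∑ i, (u i : A) * a i ^ 2 = π ^ 2 * ∑ i, (u i : A) * a' i ^ 2 := by
            rw [Finset.mul_sum]
            exact Finset.sum_congr rfl fun i _ => by rw [ha' i]; ring
          have e2 : ∑ j, (w j : A) * b j ^ 2 = π ^ 2 * ∑ j, (w j : A) * b' j ^ 2 := by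
            rw [Finset.mul_sum]
            exact Finset.sum_congr rfl fun j _ => by rw [hb' j]; ring
          rw [e1, e2]; ring
        refine ih a' b' ?_ heq'
        rcases hnd with ⟨i, hi⟩ | ⟨j, hj⟩
        · refine Or.inl ⟨i, fun hd => hi ?_⟩
          rw [ha' i, pow_succ, mul_comm (π ^ n) π]
          exact mul_dvd_mul_left π hd
        · refine Or.inr ⟨j, fun hd => hj ?_⟩
          rw [hb' j, pow_succ, mul_comm (π ^ n) π]
          exact mul_dvd_mul_left π hd

/-- **Springer's theorem for complete discretely valued fields.** -/
theorem springer_complete_dvr_isotropy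
    (A : Type) [CommRing A] [IsDomain A] [IsDiscreteValuationRing A]
    [IsAdicComplete (maximalIdeal A) A]
    (hchar : (2 : ResidueField A) ≠ 0)
    (π : A) (hπ : Irreducible π)
    (r s : ℕ) (u : Fin r → Aˣ) (w : Fin s → Aˣ) :
    (∃ xy : (Fin r → FractionRing A) × (Fin s → FractionRing A), xy ≠ 0 ∧
        (∑ i, algebraMap A (FractionRing A) (u i) * xy.1 i ^ 2) +
          algebraMap A (FractionRing A) π *
            (∑ j, algebraMap A (FractionRing A) (w j) * xy.2 j ^ 2) = 0)
      ↔ ((∃ x : Fin r → ResidueField A, x ≠ 0 ∧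
            ∑ i, residue A (u i) * x i ^ 2 = 0) ∨
          (∃ y : Fin s → ResidueField A, y ≠ 0 ∧
            ∑ j, residue A (w j) * y j ^ 2 = 0)) := by
  classical
  set K := FractionRing A
  have hinj : Function.Injective (algebraMap A K) := IsFractionRing.injective A K
  constructor
  · rintro ⟨⟨x, y⟩, hne, heq⟩
    obtain ⟨d, hd⟩ :=
      IsLocalization.exist_integer_multiples_of_finite (nonZeroDivisors A) (Sum.elim x y)
    have hax : ∀ i : Fin r, ∃ a : A, algebraMap A K a = algebraMap A K (d : A) * x i := by
      intro i
      obtain ⟨a, ha⟩ := hd (Sum.inl i)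
      exact ⟨a, by rw [ha]; simp [Algebra.smul_def]; exact Or.inl rfl⟩
    have hby : ∀ j : Fin s, ∃ b : A, algebraMap A K b = algebraMap A K (d : A) * y j := by
      intro j
      obtain ⟨b, hb⟩ := hd (Sum.inr j)
      exact ⟨b, by rw [hb]; simp [Algebra.smul_def]; exact Or.inl rfl⟩
    choose a ha using hax
    choose b hb using hby
    have hdK : algebraMap A K (d : A) ≠ 0 := by
      intro h0
      exact nonZeroDivisors.coe_ne_zero d (hinj (by rw [h0, map_zero]))
    -- equation in A
    have keyA : (∑ i, (u i : A) * a i ^ 2) + π * ∑ j, (w j : A) * b j ^ 2 = 0 := by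
      apply hinj
      rw [map_zero, map_add, map_mul, map_sum, map_sum]
      have e1 : ∑ i, algebraMap A K ((u i : A) * a i ^ 2) =
          (algebraMap A K (d : A)) ^ 2 * ∑ i, algebraMap A K (u i) * x i ^ 2 := by
        rw [Finset.mul_sum]
        refine Finset.sum_congr rfl fun i _ => ?_
        rw [map_mul, map_pow, ha i]; ring
      have e2 : ∑ j, algebraMap A K ((w j : A) * b j ^ 2) =
          (algebraMap A K (d : A)) ^ 2 * ∑ j, algebraMap A K (w j) * y j ^ 2 := by
        rw [Finset.mul_sum]
        refine Finset.sum_congr rfl fun j _ => ?_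
        rw [map_mul, map_pow, hb j]; ring
      rw [e1, e2]
      linear_combination (algebraMap A K (d : A)) ^ 2 * heq
    -- a nonzero coordinate in A
    have hcoord : (∃ i, a i ≠ 0) ∨ (∃ j, b j ≠ 0) := by
      have : (∃ i, x i ≠ 0) ∨ (∃ j, y j ≠ 0) := by
        by_contra h
        push_neg at h
        exact hne (Prod.ext (funext h.1) (funext h.2))
      rcases this with ⟨i, hi⟩ | ⟨j, hj⟩
      · refine Or.inl ⟨i, fun h0 => hi ?_⟩
        have := ha i
        rw [h0, map_zero] at this
        exact (mul_eq_zero.mp this.symm).resolve_left hdK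
      · refine Or.inr ⟨j, fun h0 => hj ?_⟩
        have := hb j
        rw [h0, map_zero] at this
        exact (mul_eq_zero.mp this.symm).resolve_left hdK
    -- a coordinate not divisible by a high power of π
    have hnd : ∃ n : ℕ, (∃ i, ¬ π ^ n ∣ a i) ∨ (∃ j, ¬ π ^ n ∣ b j) := by
      have key : ∀ c : A, c ≠ 0 → ∃ n : ℕ, ¬ π ^ n ∣ c := by
        intro c hc
        obtain ⟨m, u', hfac⟩ := IsDiscreteValuationRing.eq_unit_mul_pow_irreducible hc hπ
        refine ⟨m + 1, fun hdvd => ?_⟩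
        rw [hfac] at hdvd
        obtain ⟨k, hk⟩ := hdvd
        have hu' : (u' : A) = π * k := by
          apply mul_right_cancel₀ (pow_ne_zero m hπ.ne_zero)
          linear_combination hk
        exact hπ.not_isUnit (isUnit_of_dvd_unit ⟨k, hu'⟩ u'.isUnit)
      rcases hcoord with ⟨i, hi⟩ | ⟨j, hj⟩
      · obtain ⟨n, hn⟩ := key _ hi
        exact ⟨n, Or.inl ⟨i, hn⟩⟩
      · obtain ⟨n, hn⟩ := key _ hj
        exact ⟨n, Or.inr ⟨j, hn⟩⟩
    obtain ⟨n, hn⟩ := hnd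
    exact springer_fwd_aux hπ u w n a b hn keyA
  · rintro (⟨xb, hxb, hsum⟩ | ⟨yb, hyb, hsum⟩)
    · obtain ⟨x, ⟨i₀, hi₀⟩, hx⟩ := springer_lift_isotropic hchar u xb hxb hsum
      refine ⟨(fun i => algebraMap A K (x i), 0), ?_, ?_⟩
      · intro h
        have := congrFun (congrArg Prod.fst h) i₀
        simp only [Prod.fst_zero, Pi.zero_apply] at this
        exact hi₀.ne_zero (hinj (by rw [this, map_zero]))
      · simp only [Pi.zero_apply]
        have : ∑ j, algebraMap A K (w j) * (0 : K) ^ 2 = 0 := by simp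
        rw [this, mul_zero, add_zero]
        have : ∑ i, algebraMap A K (u i) * (algebraMap A K (x i)) ^ 2 =
            algebraMap A K (∑ i, (u i : A) * x i ^ 2) := by
          rw [map_sum]
          exact Finset.sum_congr rfl fun i _ => by rw [map_mul, map_pow]
        rw [this, hx, map_zero]
    · obtain ⟨y, ⟨j₀, hj₀⟩, hy⟩ := springer_lift_isotropic hchar w yb hyb hsum
      refine ⟨(0, fun j => algebraMap A K (y j)), ?_, ?_⟩
      · intro h
        have := congrFun (congrArg Prod.snd h) j₀
        simp only [Prod.snd_zero, Pi.zero_apply] at this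
        exact hj₀.ne_zero (hinj (by rw [this, map_zero]))
      · simp only [Pi.zero_apply]
        have h1 : ∑ i, algebraMap A K (u i) * (0 : K) ^ 2 = 0 := by simp
        have h2 : ∑ j, algebraMap A K (w j) * (algebraMap A K (y j)) ^ 2 =
            algebraMap A K (∑ j, (w j : A) * y j ^ 2) := by
          rw [map_sum]
          exact Finset.sum_congr rfl fun j _ => by rw [map_mul, map_pow]
        rw [h1, h2, hy, map_zero, mul_zero, add_zero]
end

section
/- Let K be a field of characteristic ≠ 2, and f, g two quadratic forms in n+1 variables over K such that the projective variety {f = g = 0} has no K-point. Then the quadratic form f + t·g in n+1 variables over the rational function field K(t) has no nontrivial zero (Amer–Brumer theorem). -/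
open MvPolynomial

section QuadRep

variable {K : Type} [CommRing K] {m : ℕ}

/-- Quadratic form given by a finite "representation": index set `S`, coefficients `c`,
and index functions `I J`. -/
private def QQ (S : Finset (Fin m →₀ ℕ)) (c : (Fin m →₀ ℕ) → K) (I J : (Fin m →₀ ℕ) → Fin m)
    {A : Type} [CommRing A] (φ : K →+* A) (x : Fin m → A) : A :=
  ∑ d ∈ S, φ (c d) * (x (I d) * x (J d))

/-- Polar bilinear form of `QQ`. -/
private def BB (S : Finset (Fin m →₀ ℕ)) (c : (Fin m →₀ ℕ) → K) (I J : (Fin m →₀ ℕ) → Fin m)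
    {A : Type} [CommRing A] (φ : K →+* A) (x y : Fin m → A) : A :=
  ∑ d ∈ S, φ (c d) * (x (I d) * y (J d) + y (I d) * x (J d))

variable (S : Finset (Fin m →₀ ℕ)) (c : (Fin m →₀ ℕ) → K) (I J : (Fin m →₀ ℕ) → Fin m)
variable {A : Type} [CommRing A] (φ : K →+* A)

private lemma QQ_comb {w x y : Fin m → A} {s : A} (h : ∀ i, w i = s * y i + x i) :
    QQ S c I J φ w = s ^ 2 * QQ S c I J φ y + s * BB S c I J φ y x + QQ S c I J φ x := by
  unfold QQ BB
  rw [Finset.mul_sum, Finset.mul_sum, ← Finset.sum_add_distrib, ← Finset.sum_add_distrib]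
  exact Finset.sum_congr rfl fun d _ => by rw [h (I d), h (J d)]; ring

private lemma QQ_comb_sub {w x y : Fin m → A} {s u : A} (h : ∀ i, w i = s * x i - u * y i) :
    QQ S c I J φ w =
      s ^ 2 * QQ S c I J φ x - s * u * BB S c I J φ x y + u ^ 2 * QQ S c I J φ y := by
  unfold QQ BB
  rw [Finset.mul_sum, Finset.mul_sum, Finset.mul_sum, ← Finset.sum_sub_distrib, ← Finset.sum_add_distrib]
  exact Finset.sum_congr rfl fun d _ => by rw [h (I d), h (J d)]; ring

private lemma QQ_smul {w x : Fin m → A} {s : A} (h : ∀ i, w i = s * x i) :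
    QQ S c I J φ w = s ^ 2 * QQ S c I J φ x := by
  unfold QQ
  rw [Finset.mul_sum]
  exact Finset.sum_congr rfl fun d _ => by rw [h (I d), h (J d)]; ring

private lemma BB_symm (x y : Fin m → A) : BB S c I J φ x y = BB S c I J φ y x :=
  Finset.sum_congr rfl fun d _ => by ring

private lemma BB_self (x : Fin m → A) : BB S c I J φ x x = 2 * QQ S c I J φ x := by
  unfold QQ BB
  rw [Finset.mul_sum]
  exact Finset.sum_congr rfl fun d _ => by ring

private lemma BB_zero_right {x y : Fin m → A} (h : ∀ i, y i = 0) : BB S c I J φ x y = 0 :=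
  Finset.sum_eq_zero fun d _ => by rw [h (I d), h (J d)]; ring

private lemma map_QQ {B : Type} [CommRing B] (ψ : A →+* B) (x : Fin m → A) :
    ψ (QQ S c I J φ x) = QQ S c I J (ψ.comp φ) (fun i => ψ (x i)) := by
  unfold QQ
  rw [map_sum]
  exact Finset.sum_congr rfl fun d _ => by simp

private lemma QQ_constC (a : Fin m → K) :
    QQ S c I J (Polynomial.C : K →+* Polynomial K) (fun i => Polynomial.C (a i)) =
      Polynomial.C (QQ S c I J (RingHom.id K) a) := by
  rw [map_QQ S c I J (RingHom.id K) Polynomial.C a, RingHom.comp_id]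

private lemma coeff_BB_constRight (a : Fin m → K) (y : Fin m → Polynomial K) (k : ℕ) :
    (BB S c I J (Polynomial.C : K →+* Polynomial K) y (fun i => Polynomial.C (a i))).coeff k =
      BB S c I J (RingHom.id K) (fun i => (y i).coeff k) a := by
  unfold BB
  rw [Polynomial.finset_sum_coeff]
  refine Finset.sum_congr rfl fun d _ => ?_
  have h1 : Polynomial.C (c d) * (y (I d) * Polynomial.C (a (J d)) +
      Polynomial.C (a (I d)) * y (J d)) =
      Polynomial.C (c d * a (J d)) * y (I d) + Polynomial.C (c d * a (I d)) * y (J d) := by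
    rw [Polynomial.C_mul, Polynomial.C_mul]; ring
  rw [h1, Polynomial.coeff_add, Polynomial.coeff_C_mul, Polynomial.coeff_C_mul]
  simp only [RingHom.id_apply]
  ring

private lemma coeff_BB_constLeft (a : Fin m → K) (y : Fin m → Polynomial K) (k : ℕ) :
    (BB S c I J (Polynomial.C : K →+* Polynomial K) (fun i => Polynomial.C (a i)) y).coeff k =
      BB S c I J (RingHom.id K) a (fun i => (y i).coeff k) := by
  rw [BB_symm, coeff_BB_constRight, BB_symm]

private lemma coeff_QQ_eq_zero {x : Fin m → Polynomial K} {D k : ℕ}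
    (hx : ∀ i, (x i).natDegree ≤ D) (hk : 2 * D < k) :
    (QQ S c I J (Polynomial.C : K →+* Polynomial K) x).coeff k = 0 := by
  unfold QQ
  rw [Polynomial.finset_sum_coeff]
  refine Finset.sum_eq_zero fun d _ => ?_
  rw [Polynomial.coeff_C_mul]
  have : (x (I d) * x (J d)).natDegree < k :=
    lt_of_le_of_lt (Polynomial.natDegree_mul_le.trans (add_le_add (hx _) (hx _))) (by omega)
  rw [Polynomial.coeff_eq_zero_of_natDegree_lt this, mul_zero]

end QuadRep
section Rep

private lemma degree_two_decomp {σ : Type*} [DecidableEq σ] (d : σ →₀ ℕ)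
    (hd : Finsupp.degree d = 2) :
    ∃ i j : σ, d = Finsupp.single i 1 + Finsupp.single j 1 := by
  have hcard : Multiset.card (Finsupp.toMultiset d) = 2 := by
    rw [Finsupp.card_toMultiset]
    simpa [Finsupp.degree_apply, Finsupp.sum] using hd
  obtain ⟨a, b, hab⟩ := Multiset.card_eq_two.mp hcard
  refine ⟨a, b, ?_⟩
  have := congrArg Multiset.toFinsupp hab
  rw [Finsupp.toMultiset_toFinsupp] at this
  rw [this, Multiset.insert_eq_cons, ← Multiset.singleton_add, Multiset.toFinsupp_add,
    Multiset.toFinsupp_singleton, Multiset.toFinsupp_singleton]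

private lemma exists_rep {K : Type} [CommRing K] {n : ℕ} (f : MvPolynomial (Fin (n + 1)) K)
    (hf : f.IsHomogeneous 2) :
    ∃ (S : Finset (Fin (n + 1) →₀ ℕ)) (c : (Fin (n + 1) →₀ ℕ) → K)
      (I J : (Fin (n + 1) →₀ ℕ) → Fin (n + 1)),
      ∀ (A : Type) [CommRing A] (φ : K →+* A) (x : Fin (n + 1) → A),
        eval₂ φ x f = QQ S c I J φ x := by
  classical
  set pr : (Fin (n + 1) →₀ ℕ) → Fin (n + 1) × Fin (n + 1) := fun d =>
    if h : ∃ p : Fin (n + 1) × Fin (n + 1),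
        d = Finsupp.single p.1 1 + Finsupp.single p.2 1 then h.choose else (0, 0) with hpr
  have hdec : ∀ d ∈ f.support, d = Finsupp.single (pr d).1 1 + Finsupp.single (pr d).2 1 := by
    intro d hd
    have hdeg : Finsupp.degree d = 2 := by
      have := hf (MvPolynomial.mem_support_iff.mp hd)
      rw [Finsupp.degree_eq_weight_one]; exact this
    obtain ⟨i, j, hij⟩ := degree_two_decomp d hdeg
    have hex : ∃ p : Fin (n + 1) × Fin (n + 1),
        d = Finsupp.single p.1 1 + Finsupp.single p.2 1 := ⟨(i, j), hij⟩
    simp only [hpr, dif_pos hex]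
    exact hex.choose_spec
  refine ⟨f.support, fun d => f.coeff d, fun d => (pr d).1, fun d => (pr d).2,
    fun A _ φ x => ?_⟩
  rw [eval₂_eq]
  refine Finset.sum_congr rfl fun d hd => ?_
  have key : (∏ i ∈ d.support, x i ^ d i) = x (pr d).1 * x (pr d).2 := by
    have h1 : (∏ i ∈ d.support, x i ^ d i) = d.prod fun i k => x i ^ k := rfl
    rw [h1]
    conv_lhs => rw [hdec d hd]
    rw [Finsupp.prod_add_index' (fun a => pow_zero (x a)) (fun a b₁ b₂ => pow_add _ _ _),
      Finsupp.prod_single_index (h := fun a k => x a ^ k) (pow_zero _),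
      Finsupp.prod_single_index (h := fun a k => x a ^ k) (pow_zero _), pow_one, pow_one]
  rw [key]

end Rep
section Descent

variable {K : Type} [Field K] {n : ℕ}

private lemma BB_zero_left {m : ℕ} (S : Finset (Fin m →₀ ℕ)) (c : (Fin m →₀ ℕ) → K)
    (I J : (Fin m →₀ ℕ) → Fin m) {A : Type} [CommRing A] (φ : K →+* A)
    {x y : Fin m → A} (h : ∀ i, x i = 0) : BB S c I J φ x y = 0 := by
  rw [BB_symm]; exact BB_zero_right S c I J φ h

private lemma descent
    (Sf : Finset (Fin (n + 1) →₀ ℕ)) (cf : (Fin (n + 1) →₀ ℕ) → K)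
    (If Jf : (Fin (n + 1) →₀ ℕ) → Fin (n + 1))
    (Sg : Finset (Fin (n + 1) →₀ ℕ)) (cg : (Fin (n + 1) →₀ ℕ) → K)
    (Ig Jg : (Fin (n + 1) →₀ ℕ) → Fin (n + 1))
    (hno : ∀ a : Fin (n + 1) → K, QQ Sf cf If Jf (RingHom.id K) a = 0 →
      QQ Sg cg Ig Jg (RingHom.id K) a = 0 → a = 0) :
    ∀ (D : ℕ) (v : Fin (n + 1) → Polynomial K), (∀ i, (v i).natDegree ≤ D) →
      QQ Sf cf If Jf Polynomial.C v + Polynomial.X * QQ Sg cg Ig Jg Polynomial.C v = 0 →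
      v = 0 := by
  intro D
  induction D using Nat.strong_induction_on with
  | _ D IH =>
  intro v hdeg hv
  set dd := Finset.univ.sup fun i => (v i).natDegree with hdd
  have hvd : ∀ i, (v i).natDegree ≤ dd := by
    intro i; rw [hdd]; exact Finset.le_sup (f := fun i => (v i).natDegree) (Finset.mem_univ i)
  have hddD : dd ≤ D := by
    rw [hdd]; exact Finset.sup_le fun i _ => hdeg i
  by_cases hd0 : dd = 0
  · -- base case: all coordinates constant
    have hva : ∀ i, v i = Polynomial.C ((v i).coeff 0) := fun i =>
      Polynomial.eq_C_of_natDegree_le_zero (hd0 ▸ hvd i)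
    set a : Fin (n + 1) → K := fun i => (v i).coeff 0 with ha
    have h1 : QQ Sf cf If Jf Polynomial.C v = Polynomial.C (QQ Sf cf If Jf (RingHom.id K) a) := by
      rw [show v = fun i => Polynomial.C (a i) from funext hva, QQ_constC]
    have h2 : QQ Sg cg Ig Jg Polynomial.C v = Polynomial.C (QQ Sg cg Ig Jg (RingHom.id K) a) := by
      rw [show v = fun i => Polynomial.C (a i) from funext hva, QQ_constC]
    rw [h1, h2] at hv
    have e0 : QQ Sf cf If Jf (RingHom.id K) a = 0 := by
      have := congrArg (fun p => Polynomial.coeff p 0) hv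
      simpa using this
    have e1 : QQ Sg cg Ig Jg (RingHom.id K) a = 0 := by
      have := congrArg (fun p => Polynomial.coeff p 1) hv
      simpa using this
    have ha0 := hno a e0 e1
    rw [ha] at ha0
    funext i
    have hai := congrFun ha0 i
    simp only [Pi.zero_apply] at hai
    rw [hva i, hai, map_zero]
    simp
  · -- descent step
    obtain ⟨i₀, -, hi₀⟩ := Finset.exists_mem_eq_sup Finset.univ Finset.univ_nonempty
      (fun i => (v i).natDegree)
    set a : Fin (n + 1) → K := fun i => (v i).coeff dd with ha
    set r : Fin (n + 1) → Polynomial K := fun i => v i - Polynomial.C (a i) * Polynomial.X ^ dd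
      with hrdef
    have hva : ∀ i, v i = Polynomial.X ^ dd * Polynomial.C (a i) + r i := fun i => by
      rw [hrdef]; ring
    have hrd : ∀ i, (r i).natDegree ≤ dd - 1 := by
      intro i
      rw [Polynomial.natDegree_le_iff_coeff_eq_zero]
      intro N hN
      have hN' : dd ≤ N := by omega
      rw [hrdef]
      simp only [Polynomial.coeff_sub, Polynomial.coeff_C_mul, Polynomial.coeff_X_pow]
      rcases eq_or_lt_of_le hN' with h | h
      · simp [ha, ← h]
      · rw [Polynomial.coeff_eq_zero_of_natDegree_lt (lt_of_le_of_lt (hvd i) h),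
          if_neg (by omega), mul_zero, sub_zero]
    have hrck : ∀ (i : Fin (n + 1)) (k : ℕ), dd - 1 < k → (r i).coeff k = 0 := fun i k hk =>
      Polynomial.coeff_eq_zero_of_natDegree_lt (lt_of_le_of_lt (hrd i) hk)
    -- expand hv
    set qfa := QQ Sf cf If Jf (RingHom.id K) a with hqfadef
    set qga := QQ Sg cg Ig Jg (RingHom.id K) a with hqgadef
    set Bf := BB Sf cf If Jf Polynomial.C (fun i => Polynomial.C (a i)) r with hBfdef
    set Bg := BB Sg cg Ig Jg Polynomial.C (fun i => Polynomial.C (a i)) r with hBgdef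
    set Qfr := QQ Sf cf If Jf Polynomial.C r with hQfrdef
    set Qgr := QQ Sg cg Ig Jg Polynomial.C r with hQgrdef
    have ef : QQ Sf cf If Jf Polynomial.C v =
        (Polynomial.X ^ dd) ^ 2 * Polynomial.C qfa + Polynomial.X ^ dd * Bf + Qfr := by
      rw [QQ_comb Sf cf If Jf Polynomial.C (w := v) (s := Polynomial.X ^ dd)
        (y := fun i => Polynomial.C (a i)) (x := r) hva, QQ_constC]
    have eg : QQ Sg cg Ig Jg Polynomial.C v =
        (Polynomial.X ^ dd) ^ 2 * Polynomial.C qga + Polynomial.X ^ dd * Bg + Qgr := by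
      rw [QQ_comb Sg cg Ig Jg Polynomial.C (w := v) (s := Polynomial.X ^ dd)
        (y := fun i => Polynomial.C (a i)) (x := r) hva, QQ_constC]
    have hv2 : Polynomial.C qfa * Polynomial.X ^ (2 * dd) + Polynomial.X ^ dd * Bf + Qfr
        + Polynomial.C qga * Polynomial.X ^ (2 * dd + 1) + Polynomial.X ^ (dd + 1) * Bg
        + Polynomial.X * Qgr = 0 := by
      linear_combination hv - ef - Polynomial.X * eg
    have hBfk : ∀ k, Bf.coeff k =
        BB Sf cf If Jf (RingHom.id K) a fun i => (r i).coeff k := fun k => by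
      rw [hBfdef]; exact coeff_BB_constLeft Sf cf If Jf a r k
    have hBgk : ∀ k, Bg.coeff k =
        BB Sg cg Ig Jg (RingHom.id K) a fun i => (r i).coeff k := fun k => by
      rw [hBgdef]; exact coeff_BB_constLeft Sg cg Ig Jg a r k
    have hQfrk : ∀ k, 2 * (dd - 1) < k → Qfr.coeff k = 0 := fun k hk => by
      rw [hQfrdef]; exact coeff_QQ_eq_zero Sf cf If Jf hrd hk
    have hQgrk : ∀ k, 2 * (dd - 1) < k → Qgr.coeff k = 0 := fun k hk => by
      rw [hQgrdef]; exact coeff_QQ_eq_zero Sg cg Ig Jg hrd hk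
    have hBhigh : ∀ k, dd - 1 < k →
        (BB Sf cf If Jf (RingHom.id K) a fun i => (r i).coeff k) = 0 := fun k hk =>
      BB_zero_right _ _ _ _ _ fun i => hrck i k hk
    have hBhigh' : ∀ k, dd - 1 < k →
        (BB Sg cg Ig Jg (RingHom.id K) a fun i => (r i).coeff k) = 0 := fun k hk =>
      BB_zero_right _ _ _ _ _ fun i => hrck i k hk
    -- coefficient at 2*dd+1 : qga = 0
    have hqga : qga = 0 := by
      have E := congrArg (fun p => Polynomial.coeff p (2 * dd + 1)) hv2
      simp only [Polynomial.coeff_add, Polynomial.coeff_zero] at E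
      have t1 : (Polynomial.C qfa * Polynomial.X ^ (2 * dd)).coeff (2 * dd + 1) = 0 := by
        rw [Polynomial.coeff_C_mul, Polynomial.coeff_X_pow, if_neg (by omega), mul_zero]
      have t2 : (Polynomial.X ^ dd * Bf).coeff (2 * dd + 1) = 0 := by
        rw [show 2 * dd + 1 = (dd + 1) + dd by omega, Polynomial.coeff_X_pow_mul,
          hBfk, hBhigh _ (by omega)]
      have t3 : Qfr.coeff (2 * dd + 1) = 0 := hQfrk _ (by omega)
      have t4 : (Polynomial.C qga * Polynomial.X ^ (2 * dd + 1)).coeff (2 * dd + 1) = qga := by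
        rw [Polynomial.coeff_C_mul, Polynomial.coeff_X_pow, if_pos rfl, mul_one]
      have t5 : (Polynomial.X ^ (dd + 1) * Bg).coeff (2 * dd + 1) = 0 := by
        rw [show 2 * dd + 1 = dd + (dd + 1) by omega, Polynomial.coeff_X_pow_mul,
          hBgk, hBhigh' _ (by omega)]
      have t6 : (Polynomial.X * Qgr).coeff (2 * dd + 1) = 0 := by
        rw [show 2 * dd + 1 = (2 * dd) + 1 by rfl, Polynomial.coeff_X_mul]
        exact hQgrk _ (by omega)
      rw [t1, t2, t3, t4, t5, t6] at E
      linear_combination E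
    -- coefficient at 2*dd : qfa + BB_g a r' = 0
    have hfb : qfa + (BB Sg cg Ig Jg (RingHom.id K) a fun i => (r i).coeff (dd - 1)) = 0 := by
      have E := congrArg (fun p => Polynomial.coeff p (2 * dd)) hv2
      simp only [Polynomial.coeff_add, Polynomial.coeff_zero] at E
      have t1 : (Polynomial.C qfa * Polynomial.X ^ (2 * dd)).coeff (2 * dd) = qfa := by
        rw [Polynomial.coeff_C_mul, Polynomial.coeff_X_pow, if_pos rfl, mul_one]
      have t2 : (Polynomial.X ^ dd * Bf).coeff (2 * dd) = 0 := by
        rw [show 2 * dd = dd + dd by omega, Polynomial.coeff_X_pow_mul,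
          hBfk, hBhigh _ (by omega)]
      have t3 : Qfr.coeff (2 * dd) = 0 := hQfrk _ (by omega)
      have t4 : (Polynomial.C qga * Polynomial.X ^ (2 * dd + 1)).coeff (2 * dd) = 0 := by
        rw [Polynomial.coeff_C_mul, Polynomial.coeff_X_pow, if_neg (by omega), mul_zero]
      have t5 : (Polynomial.X ^ (dd + 1) * Bg).coeff (2 * dd) =
          BB Sg cg Ig Jg (RingHom.id K) a fun i => (r i).coeff (dd - 1) := by
        rw [show 2 * dd = (dd - 1) + (dd + 1) by omega, Polynomial.coeff_X_pow_mul, hBgk]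
      have t6 : (Polynomial.X * Qgr).coeff (2 * dd) = 0 := by
        rw [show 2 * dd = (2 * dd - 1) + 1 by omega, Polynomial.coeff_X_mul]
        exact hQgrk _ (by omega)
      rw [t1, t2, t3, t4, t5, t6] at E
      linear_combination E
    by_cases hqfa : qfa = 0
    · -- common zero: contradiction with top coefficient
      exfalso
      have hqga' : QQ Sg cg Ig Jg (RingHom.id K) a = 0 := hqga
      have ha0 := hno a hqfa hqga'
      have hdeg0 : (v i₀).natDegree = dd := by rw [hdd, ← hi₀]
      have hvi : v i₀ ≠ 0 := fun h =>
        hd0 (by rw [← hdeg0, h, Polynomial.natDegree_zero])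
      have hai : a i₀ ≠ 0 := by
        simp only [ha]
        rw [← hdeg0]
        exact fun h => hvi (Polynomial.leadingCoeff_eq_zero.mp h)
      rw [ha] at ha0
      exact hai (congrFun ha0 i₀)
    · -- reflection step
      set Bfv := BB Sf cf If Jf Polynomial.C v (fun i => Polynomial.C (a i)) with hBfvdef
      set Bgv := BB Sg cg Ig Jg Polynomial.C v (fun i => Polynomial.C (a i)) with hBgvdef
      set β := Bfv + Polynomial.X * Bgv with hβ
      have hCqga0 : Polynomial.C qga = 0 := by rw [hqga, map_zero]
      have hcaf : QQ Sf cf If Jf Polynomial.C (fun i => Polynomial.C (a i))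
          = Polynomial.C qfa := QQ_constC Sf cf If Jf a
      have hcag : QQ Sg cg Ig Jg Polynomial.C (fun i => Polynomial.C (a i))
          = Polynomial.C qga := QQ_constC Sg cg Ig Jg a
      have ewf := QQ_comb_sub Sf cf If Jf Polynomial.C
        (w := fun i => Polynomial.C qfa * v i - β * Polynomial.C (a i))
        (x := v) (y := fun i => Polynomial.C (a i)) (s := Polynomial.C qfa) (u := β)
        (fun i => rfl)
      have ewg := QQ_comb_sub Sg cg Ig Jg Polynomial.C
        (w := fun i => Polynomial.C qfa * v i - β * Polynomial.C (a i))
        (x := v) (y := fun i => Polynomial.C (a i)) (s := Polynomial.C qfa) (u := β)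
        (fun i => rfl)
      have hΦw : QQ Sf cf If Jf Polynomial.C
            (fun i => Polynomial.C qfa * v i - β * Polynomial.C (a i))
          + Polynomial.X * QQ Sg cg Ig Jg Polynomial.C
            (fun i => Polynomial.C qfa * v i - β * Polynomial.C (a i)) = 0 := by
        rw [ewf, ewg, hcaf, hcag, hCqga0]
        linear_combination (Polynomial.C qfa) ^ 2 * hv - Polynomial.C qfa * β * hβ
      -- degree bounds for w
      have hvk0 : ∀ (i : Fin (n + 1)) (k : ℕ), dd < k → (v i).coeff k = 0 := fun i k hk =>
        Polynomial.coeff_eq_zero_of_natDegree_lt (lt_of_le_of_lt (hvd i) hk)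
      have hBfvk : ∀ k, Bfv.coeff k =
          BB Sf cf If Jf (RingHom.id K) (fun i => (v i).coeff k) a := fun k => by
        rw [hBfvdef]; exact coeff_BB_constRight Sf cf If Jf a v k
      have hBgvk : ∀ k, Bgv.coeff k =
          BB Sg cg Ig Jg (RingHom.id K) (fun i => (v i).coeff k) a := fun k => by
        rw [hBgvdef]; exact coeff_BB_constRight Sg cg Ig Jg a v k
      have hvdd : (fun i => (v i).coeff dd) = a := rfl
      have hvdm1 : (fun i => (v i).coeff (dd - 1)) = fun i => (r i).coeff (dd - 1) := by
        funext i
        rw [hva i, Polynomial.coeff_add, Polynomial.coeff_X_pow_mul', if_neg (by omega), zero_add]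
      have hβdd : β.coeff dd = qfa := by
        have u1 : Bfv.coeff dd = 2 * qfa := by
          rw [hBfvk, hvdd, BB_self, ← hqfadef]
        have u2 : (Polynomial.X * Bgv).coeff dd = -qfa := by
          rw [show dd = (dd - 1) + 1 by omega, Polynomial.coeff_X_mul, hBgvk, hvdm1,
            BB_symm]
          linear_combination hfb
        rw [hβ, Polynomial.coeff_add, u1, u2]
        ring
      have hβd1 : β.coeff (dd + 1) = 0 := by
        have u1 : Bfv.coeff (dd + 1) = 0 := by
          rw [hBfvk]
          exact BB_zero_left Sf cf If Jf _ fun i => hvk0 i _ (by omega)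
        have u2 : (Polynomial.X * Bgv).coeff (dd + 1) = 0 := by
          rw [Polynomial.coeff_X_mul, hBgvk, hvdd, BB_self, ← hqgadef, hqga, mul_zero]
        rw [hβ, Polynomial.coeff_add, u1, u2, add_zero]
      have hβk : ∀ k, dd + 2 ≤ k → β.coeff k = 0 := by
        intro k hk
        have u1 : Bfv.coeff k = 0 := by
          rw [hBfvk]
          exact BB_zero_left Sf cf If Jf _ fun i => hvk0 i _ (by omega)
        have u2 : (Polynomial.X * Bgv).coeff k = 0 := by
          rw [show k = (k - 1) + 1 by omega, Polynomial.coeff_X_mul, hBgvk]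
          exact BB_zero_left Sg cg Ig Jg _ fun i => hvk0 i _ (by omega)
        rw [hβ, Polynomial.coeff_add, u1, u2, add_zero]
      have hwd : ∀ i, ((fun i => Polynomial.C qfa * v i - β * Polynomial.C (a i)) i).natDegree
          ≤ dd - 1 := by
        intro i
        rw [Polynomial.natDegree_le_iff_coeff_eq_zero]
        intro N hN
        simp only [Polynomial.coeff_sub, Polynomial.coeff_C_mul, Polynomial.coeff_mul_C]
        have hN' : dd ≤ N := by omega
        rcases Nat.lt_or_ge N (dd + 1) with h1 | h1
        · have hNdd : N = dd := by omega
          rw [hNdd, hβdd]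
          have : (v i).coeff dd = a i := rfl
          rw [this]
          ring
        · rcases Nat.lt_or_ge N (dd + 2) with h2 | h2
          · have hNdd : N = dd + 1 := by omega
            rw [hNdd, hβd1, hvk0 i _ (by omega)]
            ring
          · rw [hβk N h2, hvk0 i _ (by omega)]
            ring
      have hwIH := IH (dd - 1) (by omega)
        (fun i => Polynomial.C qfa * v i - β * Polynomial.C (a i)) hwd hΦw
      have h5 : ∀ i, Polynomial.C qfa * v i = β * Polynomial.C (a i) := by
        intro i
        have := congrFun hwIH i
        simpa [sub_eq_zero] using this
      have hAf := (QQ_smul Sf cf If Jf Polynomial.C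
          (w := fun i => Polynomial.C qfa * v i) (s := Polynomial.C qfa) (x := v)
          (fun i => rfl)).symm.trans
        (QQ_smul Sf cf If Jf Polynomial.C
          (w := fun i => Polynomial.C qfa * v i) (s := β)
          (x := fun i => Polynomial.C (a i)) h5)
      have hAg := (QQ_smul Sg cg Ig Jg Polynomial.C
          (w := fun i => Polynomial.C qfa * v i) (s := Polynomial.C qfa) (x := v)
          (fun i => rfl)).symm.trans
        (QQ_smul Sg cg Ig Jg Polynomial.C
          (w := fun i => Polynomial.C qfa * v i) (s := β)
          (x := fun i => Polynomial.C (a i)) h5)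
      rw [hcaf] at hAf
      rw [hcag, hCqga0] at hAg
      -- hAf : (C qfa)^2 * Qf v = β^2 * C qfa ; hAg : (C qfa)^2 * Qg v = β^2 * 0
      have hb2 : β ^ 2 * Polynomial.C qfa = 0 := by
        linear_combination (Polynomial.C qfa) ^ 2 * hv - hAf - Polynomial.X * hAg
      have hCne : Polynomial.C qfa ≠ 0 := fun h => hqfa (by
        simpa using congrArg (fun p => Polynomial.coeff p 0) h)
      have hβ0 : β = 0 := by
        have := (mul_eq_zero.mp hb2).resolve_right hCne
        exact pow_eq_zero_iff (n := 2) (by omega) |>.mp this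
      funext i
      have := h5 i
      rw [hβ0, zero_mul] at this
      have hv0 := (mul_eq_zero.mp this).resolve_left hCne
      exact hv0

end Descent
/-- **Amer–Brumer theorem.** Let `K` be a field of characteristic `≠ 2` and `f`, `g`
two quadratic forms (homogeneous polynomials of degree 2) in `n+1` variables over `K`
whose common projective zero locus `{f = g = 0}` has no `K`-point, i.e. the only common
zero of `f` and `g` over `K` is the trivial one.  Then the quadratic form `f + t·g`
over the rational function field `K(t)` has no nontrivial zero. -/
theorem amer_brumer
    (K : Type) [Field K] (hchar : (2 : K) ≠ 0)
    (n : ℕ) (f g : MvPolynomial (Fin (n + 1)) K)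
    (hf : f.IsHomogeneous 2) (hg : g.IsHomogeneous 2)
    (hnoK : ∀ x : Fin (n + 1) → K, eval x f = 0 → eval x g = 0 → x = 0) :
    ∀ X : Fin (n + 1) → RatFunc K,
      eval X (f.map (algebraMap K (RatFunc K))) +
          RatFunc.X * eval X (g.map (algebraMap K (RatFunc K))) = 0 →
        X = 0 := by
  classical
  obtain ⟨Sf, cf, If, Jf, hrepf⟩ := exists_rep f hf
  obtain ⟨Sg, cg, Ig, Jg, hrepg⟩ := exists_rep g hg
  have hno : ∀ a : Fin (n + 1) → K, QQ Sf cf If Jf (RingHom.id K) a = 0 →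
      QQ Sg cg Ig Jg (RingHom.id K) a = 0 → a = 0 := by
    intro a h1 h2
    apply hnoK
    · rw [show (eval a f : K) = eval₂ (RingHom.id K) a f from rfl, hrepf]; exact h1
    · rw [show (eval a g : K) = eval₂ (RingHom.id K) a g from rfl, hrepg]; exact h2
  intro X hX
  -- rewrite the hypothesis via the representation
  rw [eval_map, eval_map, hrepf, hrepg] at hX
  -- clear denominators
  obtain ⟨b, hb⟩ := IsLocalization.exist_integer_multiples
    (nonZeroDivisors (Polynomial K)) Finset.univ X
  choose p hp using fun i => hb i (Finset.mem_univ i)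
  -- hp : ∀ i, algebraMap _ _ (p i) = (b : K[X]) • X i
  set ψ := algebraMap (Polynomial K) (RatFunc K) with hψ
  have hψinj : Function.Injective ψ := IsFractionRing.injective (Polynomial K) (RatFunc K)
  have hcomp : ψ.comp Polynomial.C = algebraMap K (RatFunc K) := by
    rw [hψ, ← Polynomial.algebraMap_eq, ← IsScalarTower.algebraMap_eq]
  have hp' : ∀ i, ψ (p i) = ψ (b : Polynomial K) * X i := by
    intro i
    rw [hψ, hp i, Algebra.smul_def]
  have hΦp : QQ Sf cf If Jf Polynomial.C p
      + Polynomial.X * QQ Sg cg Ig Jg Polynomial.C p = 0 := by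
    apply hψinj
    rw [map_zero, map_add, map_mul, map_QQ, map_QQ, hcomp]
    have e1 : QQ Sf cf If Jf (algebraMap K (RatFunc K)) (fun i => ψ (p i))
        = ψ (b : Polynomial K) ^ 2 * QQ Sf cf If Jf (algebraMap K (RatFunc K)) X :=
      QQ_smul Sf cf If Jf (algebraMap K (RatFunc K)) hp'
    have e2 : QQ Sg cg Ig Jg (algebraMap K (RatFunc K)) (fun i => ψ (p i))
        = ψ (b : Polynomial K) ^ 2 * QQ Sg cg Ig Jg (algebraMap K (RatFunc K)) X :=
      QQ_smul Sg cg Ig Jg (algebraMap K (RatFunc K)) hp'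
    have hXX : ψ Polynomial.X = RatFunc.X := RatFunc.algebraMap_X
    rw [e1, e2, hXX]
    linear_combination ψ (b : Polynomial K) ^ 2 * hX
  have hp0 := descent Sf cf If Jf Sg cg Ig Jg hno
    (Finset.univ.sup fun i => (p i).natDegree) p
    (fun i => Finset.le_sup (f := fun i => (p i).natDegree) (Finset.mem_univ i)) hΦp
  have hbne : ψ (b : Polynomial K) ≠ 0 := by
    intro h
    exact nonZeroDivisors.ne_zero b.2 (hψinj (by rw [h, map_zero]))
  funext i
  have := hp' i
  rw [congrFun hp0 i, Pi.zero_apply, map_zero] at this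
  have := (mul_eq_zero.mp this.symm).resolve_left hbne
  simpa using this
end

section
/- Let p ≡ 1 (mod 4) be a prime, u ∈ Z_p^× a non-square unit, s ≥ 2 an integer. Then the system f = x₁² + u x₂² + p x₃² + u p^{2s} x₄² + p^{2s-2} x₅² = 0, g = p^{4s+1} x₁² + p^{4s} x₂² + u p^{2s} x₃² + x₄² + p x₅² = 0 has no nontrivial solution in Q_p^5. -/
lemma aux_toZMod_eq_zero_iff {p : ℕ} [Fact p.Prime] (x : ℤ_[p]) :
    PadicInt.toZMod x = 0 ↔ (p : ℤ_[p]) ∣ x := by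
  rw [← RingHom.mem_ker, PadicInt.ker_toZMod, PadicInt.maximalIdeal_eq_span_p,
    Ideal.mem_span_singleton]

lemma aux_sq_lift {p : ℕ} [hpp : Fact p.Prime] (hp2 : p ≠ 2) (u : ℤ_[p]ˣ)
    (h : IsSquare (PadicInt.toZMod (u : ℤ_[p]))) : IsSquare (u : ℤ_[p]) := by
  obtain ⟨r, hr⟩ := h
  have hu1 : ‖(u : ℤ_[p])‖ = 1 := PadicInt.norm_units u
  have hpd : ¬ (p : ℤ_[p]) ∣ (u : ℤ_[p]) := by
    rw [← PadicInt.norm_lt_one_iff_dvd, hu1]; norm_num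
  have hr0 : r ≠ 0 := by
    rintro rfl
    rw [mul_zero] at hr
    exact hpd ((aux_toZMod_eq_zero_iff _).1 hr)
  set a : ℤ_[p] := ((r.val : ℕ) : ℤ_[p]) with ha_def
  have ha : PadicInt.toZMod a = r := by
    rw [ha_def, map_natCast]
    exact ZMod.natCast_rightInverse r
  have hadvd : ¬ (p : ℤ_[p]) ∣ a := by
    rw [← aux_toZMod_eq_zero_iff, ha]
    exact hr0
  have hanorm : ‖a‖ = 1 :=
    le_antisymm a.norm_le_one (not_lt.1 (fun h => hadvd ((PadicInt.norm_lt_one_iff_dvd a).1 h)))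
  have h2norm : ‖(2 : ℤ_[p])‖ = 1 := by
    have : ¬ ‖((2 : ℤ) : ℤ_[p])‖ < 1 := by
      rw [PadicInt.norm_int_lt_one_iff_dvd]
      intro hd
      have h2 : p ∣ 2 := by exact_mod_cast hd
      have := Nat.le_of_dvd (by norm_num) h2
      have := hpp.out.two_le
      omega
    push_cast at this
    exact le_antisymm (PadicInt.norm_le_one _) (not_lt.1 this)
  set F : Polynomial ℤ_[p] := Polynomial.X ^ 2 - Polynomial.C (u : ℤ_[p]) with hF
  have hFa : F.eval a = a ^ 2 - (u : ℤ_[p]) := by simp [hF]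
  have hFd : F.derivative.eval a = 2 * a := by
    simp [hF, Polynomial.derivative_sub]
    exact Or.inl one_add_one_eq_two
  have hcond : ‖F.eval a‖ < ‖F.derivative.eval a‖ ^ 2 := by
    rw [hFa, hFd, norm_mul, h2norm, hanorm]
    norm_num
    rw [PadicInt.norm_lt_one_iff_dvd, ← aux_toZMod_eq_zero_iff]
    rw [map_sub, map_pow, ha, hr]
    ring
  obtain ⟨z, hz, -⟩ := hensels_lemma hcond
  simp only [hF, Polynomial.coe_aeval_eq_eval, Polynomial.eval_sub, Polynomial.eval_pow, Polynomial.eval_X,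
    Polynomial.eval_C] at hz
  exact ⟨z, by linear_combination -hz⟩

lemma aux_step {p : ℕ} [hpp : Fact p.Prime] (hp : p % 4 = 1)
    (u : ℤ_[p]ˣ) (hu : ¬ IsSquare (u : ℤ_[p])) (a b : ℤ_[p])
    (h : (p : ℤ_[p]) ∣ a ^ 2 + (u : ℤ_[p]) * b ^ 2) :
    (p : ℤ_[p]) ∣ a ∧ (p : ℤ_[p]) ∣ b := by
  have hp2 : p ≠ 2 := by omega
  have husq : ¬ IsSquare (PadicInt.toZMod (u : ℤ_[p])) := fun hsq => hu (aux_sq_lift hp2 u hsq)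
  set A := PadicInt.toZMod a with hA
  set B := PadicInt.toZMod b with hB
  have h0 : A ^ 2 + PadicInt.toZMod (u : ℤ_[p]) * B ^ 2 = 0 := by
    have := (aux_toZMod_eq_zero_iff _).2 h
    rw [map_add, map_mul, map_pow, map_pow] at this
    exact this
  have hBz : B = 0 := by
    by_contra hBz
    apply husq
    obtain ⟨i, hi⟩ := (ZMod.exists_sq_eq_neg_one_iff (p := p)).2 (by omega)
    refine ⟨i * A * B⁻¹, ?_⟩
    field_simp
    linear_combination h0 + A ^ 2 * hi
  have hAz : A = 0 := by
    rw [hBz] at h0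
    have : A ^ 2 = 0 := by linear_combination h0
    exact pow_eq_zero_iff (by norm_num) |>.1 this
  exact ⟨(aux_toZMod_eq_zero_iff a).1 hAz, (aux_toZMod_eq_zero_iff b).1 hBz⟩


/-- Let `p ≡ 1 (mod 4)` be a prime, `u ∈ ℤ_p^×` a unit which is not a square and
`s ≥ 2` an integer.  Then the system of two quadratic forms
`f = x₁² + u x₂² + p x₃² + u p^{2s} x₄² + p^{2s-2} x₅²` and
`g = p^{4s+1} x₁² + p^{4s} x₂² + u p^{2s} x₃² + x₄² + p x₅²`
has no nontrivial common zero in `ℚ_p⁵`. -/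
theorem smooth_intersection_no_Qp_point
    (p : ℕ) [Fact p.Prime] (hp : p % 4 = 1)
    (u : ℤ_[p]ˣ) (hu : ¬ IsSquare (u : ℤ_[p]))
    (s : ℕ) (hs : 2 ≤ s) :
    ∀ x : Fin 5 → ℚ_[p],
      x 0 ^ 2 + (u : ℤ_[p]) * x 1 ^ 2 + (p : ℚ_[p]) * x 2 ^ 2 +
          (u : ℤ_[p]) * (p : ℚ_[p]) ^ (2 * s) * x 3 ^ 2 +
          (p : ℚ_[p]) ^ (2 * s - 2) * x 4 ^ 2 = 0 →
      (p : ℚ_[p]) ^ (4 * s + 1) * x 0 ^ 2 + (p : ℚ_[p]) ^ (4 * s) * x 1 ^ 2 +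
          (u : ℤ_[p]) * (p : ℚ_[p]) ^ (2 * s) * x 2 ^ 2 + x 3 ^ 2 +
          (p : ℚ_[p]) * x 4 ^ 2 = 0 →
      x = 0 := by
  intro x hf hg
  by_contra hx
  obtain ⟨j, hj⟩ := Function.ne_iff.1 hx
  have hne : (Finset.univ : Finset (Fin 5)).Nonempty := ⟨j, Finset.mem_univ j⟩
  obtain ⟨i0, -, hi0⟩ := Finset.exists_mem_eq_sup' hne (fun i => ‖x i‖)
  have hsup : ∀ i, ‖x i‖ ≤ ‖x i0‖ := fun i => hi0 ▸ Finset.le_sup' (fun i => ‖x i‖) (Finset.mem_univ i)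
  have hx0 : x i0 ≠ 0 := by
    intro h0
    have := hsup j
    rw [h0, norm_zero] at this
    exact hj (norm_le_zero_iff.1 this)
  have hppos : (0 : ℝ) < (p : ℝ) := by exact_mod_cast (Fact.out (p := p.Prime)).pos
  set m : ℤ := (x i0).valuation with hm
  have hnorm0 : ‖x i0‖ = (p : ℝ) ^ (-m) := Padic.norm_eq_zpow_neg_valuation hx0
  set c : ℚ_[p] := (p : ℚ_[p]) ^ (-m) with hc
  have hcnorm : ‖c‖ = (p : ℝ) ^ m := by
    rw [hc, norm_zpow, Padic.norm_p, inv_zpow, ← zpow_neg, neg_neg]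
  set y : Fin 5 → ℚ_[p] := fun i => c * x i with hy
  have hyle : ∀ i, ‖y i‖ ≤ 1 := by
    intro i
    have h1 : ‖y i‖ = ‖c‖ * ‖x i‖ := norm_mul _ _
    rw [h1, hcnorm]
    calc (p : ℝ) ^ m * ‖x i‖ ≤ (p : ℝ) ^ m * ((p : ℝ) ^ (-m)) := by
          rw [← hnorm0]
          exact mul_le_mul_of_nonneg_left (hsup i) (le_of_lt (zpow_pos hppos m))
      _ = 1 := by
          rw [← zpow_add₀ (ne_of_gt hppos), add_neg_cancel, zpow_zero]
  have hy0 : ‖y i0‖ = 1 := by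
    have h1 : ‖y i0‖ = ‖c‖ * ‖x i0‖ := norm_mul _ _
    rw [h1, hcnorm, hnorm0, ← zpow_add₀ (ne_of_gt hppos), add_neg_cancel, zpow_zero]
  set z : Fin 5 → ℤ_[p] := fun i => ⟨y i, hyle i⟩ with hzdef
  have hzy : ∀ i, ((z i : ℤ_[p]) : ℚ_[p]) = y i := fun i => rfl
  have hfy : (y 0) ^ 2 + ((u : ℤ_[p]) : ℚ_[p]) * (y 1) ^ 2 + (p : ℚ_[p]) * (y 2) ^ 2 +
      ((u : ℤ_[p]) : ℚ_[p]) * (p : ℚ_[p]) ^ (2 * s) * (y 3) ^ 2 +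
      (p : ℚ_[p]) ^ (2 * s - 2) * (y 4) ^ 2 = 0 := by
    simp only [hy]
    linear_combination c ^ 2 * hf
  have hgy : (p : ℚ_[p]) ^ (4 * s + 1) * (y 0) ^ 2 + (p : ℚ_[p]) ^ (4 * s) * (y 1) ^ 2 +
      ((u : ℤ_[p]) : ℚ_[p]) * (p : ℚ_[p]) ^ (2 * s) * (y 2) ^ 2 + (y 3) ^ 2 +
      (p : ℚ_[p]) * (y 4) ^ 2 = 0 := by
    simp only [hy]
    linear_combination c ^ 2 * hg
  have hfz : (z 0) ^ 2 + (u : ℤ_[p]) * (z 1) ^ 2 + (p : ℤ_[p]) * (z 2) ^ 2 +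
      (u : ℤ_[p]) * (p : ℤ_[p]) ^ (2 * s) * (z 3) ^ 2 +
      (p : ℤ_[p]) ^ (2 * s - 2) * (z 4) ^ 2 = 0 := by
    apply Subtype.ext
    push_cast
    simpa only [hzy] using hfy
  have hgz : (p : ℤ_[p]) ^ (4 * s + 1) * (z 0) ^ 2 + (p : ℤ_[p]) ^ (4 * s) * (z 1) ^ 2 +
      (u : ℤ_[p]) * (p : ℤ_[p]) ^ (2 * s) * (z 2) ^ 2 + (z 3) ^ 2 +
      (p : ℤ_[p]) * (z 4) ^ 2 = 0 := by
    apply Subtype.ext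
    push_cast
    simpa only [hzy] using hgy
  have hP : Prime ((p : ℕ) : ℤ_[p]) := PadicInt.prime_p
  have hPn : ∀ n : ℕ, 1 ≤ n → (p : ℤ_[p]) ∣ (p : ℤ_[p]) ^ n :=
    fun n hn => dvd_pow_self _ (by omega)
  -- Step 1 : p ∣ z 3
  have hz3 : (p : ℤ_[p]) ∣ z 3 := by
    apply hP.dvd_of_dvd_pow (n := 2)
    have he : (z 3) ^ 2 = -((p : ℤ_[p]) ^ (4 * s + 1) * (z 0) ^ 2 +
        (p : ℤ_[p]) ^ (4 * s) * (z 1) ^ 2 +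
        (u : ℤ_[p]) * (p : ℤ_[p]) ^ (2 * s) * (z 2) ^ 2 +
        (p : ℤ_[p]) * (z 4) ^ 2) := by linear_combination hgz
    rw [he]
    refine dvd_neg.2 (dvd_add (dvd_add (dvd_add ?_ ?_) ?_) ?_)
    · exact (hPn _ (by omega)).mul_right _
    · exact (hPn _ (by omega)).mul_right _
    · exact ((hPn (2 * s) (by omega)).mul_left _).mul_right _
    · exact dvd_mul_right _ _
  -- Step 2 : p ∣ z 4
  have hz4 : (p : ℤ_[p]) ∣ z 4 := by
    apply hP.dvd_of_dvd_pow (n := 2)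
    have h2 : (p : ℤ_[p]) ^ 2 ∣ (p : ℤ_[p]) * (z 4) ^ 2 := by
      have he : (p : ℤ_[p]) * (z 4) ^ 2 = -((p : ℤ_[p]) ^ (4 * s + 1) * (z 0) ^ 2 +
          (p : ℤ_[p]) ^ (4 * s) * (z 1) ^ 2 +
          (u : ℤ_[p]) * (p : ℤ_[p]) ^ (2 * s) * (z 2) ^ 2 +
          (z 3) ^ 2) := by linear_combination hgz
      rw [he]
      refine dvd_neg.2 (dvd_add (dvd_add (dvd_add ?_ ?_) ?_) ?_)
      · exact (pow_dvd_pow _ (by omega)).mul_right _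
      · exact (pow_dvd_pow _ (by omega)).mul_right _
      · exact ((pow_dvd_pow _ (by omega : 2 ≤ 2 * s)).mul_left _).mul_right _
      · exact pow_dvd_pow_of_dvd hz3 2
    rw [pow_two] at h2
    exact (mul_dvd_mul_iff_left hP.ne_zero).1 h2
  -- Step 3 : p ∣ z 0 and p ∣ z 1
  have hz01 : (p : ℤ_[p]) ∣ z 0 ∧ (p : ℤ_[p]) ∣ z 1 := by
    apply aux_step hp u hu
    have he : (z 0) ^ 2 + (u : ℤ_[p]) * (z 1) ^ 2 = -((p : ℤ_[p]) * (z 2) ^ 2 +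
        (u : ℤ_[p]) * (p : ℤ_[p]) ^ (2 * s) * (z 3) ^ 2 +
        (p : ℤ_[p]) ^ (2 * s - 2) * (z 4) ^ 2) := by linear_combination hfz
    rw [he]
    refine dvd_neg.2 (dvd_add (dvd_add ?_ ?_) ?_)
    · exact dvd_mul_right _ _
    · exact ((hPn (2 * s) (by omega)).mul_left _).mul_right _
    · exact (hPn (2 * s - 2) (by omega)).mul_right _
  obtain ⟨hz0, hz1⟩ := hz01
  -- Step 4 : p ∣ z 2
  have hz2 : (p : ℤ_[p]) ∣ z 2 := by
    apply hP.dvd_of_dvd_pow (n := 2)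
    have h2 : (p : ℤ_[p]) ^ 2 ∣ (p : ℤ_[p]) * (z 2) ^ 2 := by
      have he : (p : ℤ_[p]) * (z 2) ^ 2 = -((z 0) ^ 2 + (u : ℤ_[p]) * (z 1) ^ 2 +
          (u : ℤ_[p]) * (p : ℤ_[p]) ^ (2 * s) * (z 3) ^ 2 +
          (p : ℤ_[p]) ^ (2 * s - 2) * (z 4) ^ 2) := by linear_combination hfz
      rw [he]
      refine dvd_neg.2 (dvd_add (dvd_add (dvd_add ?_ ?_) ?_) ?_)
      · exact pow_dvd_pow_of_dvd hz0 2
      · exact (pow_dvd_pow_of_dvd hz1 2).mul_left _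
      · exact ((pow_dvd_pow _ (by omega : 2 ≤ 2 * s)).mul_left _).mul_right _
      · exact (pow_dvd_pow _ (by omega : 2 ≤ 2 * s - 2)).mul_right _
    rw [pow_two] at h2
    exact (mul_dvd_mul_iff_left hP.ne_zero).1 h2
  -- contradiction with primitivity
  have hall : (p : ℤ_[p]) ∣ z i0 := by fin_cases i0 <;> assumption
  have hlt : ‖z i0‖ < 1 := (PadicInt.norm_lt_one_iff_dvd _).2 hall
  have heq : ‖z i0‖ = 1 := by
    rw [PadicInt.norm_def]
    exact hy0
  rw [heq] at hlt
  exact lt_irrefl _ hlt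
end

section
/- Let p be an odd prime, E the elliptic curve y² = x(1-x)(x-p) over Q_p, F = Q_p(E), and v a nontrivial discrete valuation on F with completion F_v. If v(1-x) < 0, then 1-x is a square in F_v. -/
set_option linter.unusedVariables false
open Multiplicative WithZero Filter Polynomial
local notation "Zm" => WithZero (Multiplicative ℤ)


lemma lt_one_le_ofAdd_neg_one {x : Zm} (hx : x < 1) : x ≤ (ofAdd (-1 : ℤ) : Multiplicative ℤ) := by
  rcases eq_or_ne x 0 with rfl | h0
  · exact zero_le
  obtain ⟨a, rfl⟩ := WithZero.ne_zero_iff_exists.mp h0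
  rw [show (1 : Zm) = ((1 : Multiplicative ℤ) : Zm) from rfl, WithZero.coe_lt_coe] at hx
  rw [WithZero.coe_le_coe]
  have h1 : toAdd a < 0 := hx
  exact (by omega : toAdd a ≤ -1)

lemma pow_lt_unit_eventually (γ : Zmˣ) :
    ∃ N : ℕ, ∀ n ≥ N, ((ofAdd (-1 : ℤ) : Multiplicative ℤ) : Zm) ^ (n+1) < (γ : Zm) := by
  have hγ : (γ : Zm) ≠ 0 := γ.ne_zero
  refine ⟨(toAdd (WithZero.unzero hγ)).natAbs, fun n hn => ?_⟩
  rw [← WithZero.coe_unzero hγ, ← WithZero.coe_pow, WithZero.coe_lt_coe]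
  have h1 : ofAdd (-1 : ℤ) ^ (n+1) = ofAdd (-((n:ℤ)+1)) := by
    rw [← ofAdd_nsmul]; norm_num
  rw [h1]
  change -((n:ℤ)+1) < toAdd (WithZero.unzero hγ)
  rcases Int.natAbs_eq (toAdd (WithZero.unzero hγ)) with h2 | h2 <;> omega

lemma isSquare_of_val_sub_one_lt (K : Type) [Field K] [vK : Valued K (WithZero (Multiplicative ℤ))]
    [CompleteSpace K] (h2 : Valued.v (2 : K) = 1) (c : K) (hc : Valued.v (c - 1) < 1) :
    IsSquare c := by
  set v : Valuation K Zm := Valued.v with hvdef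
  set δ : Zm := ((ofAdd (-1 : ℤ) : Multiplicative ℤ) : Zm) with hδdef
  have hδ1 : δ < 1 := by
    rw [hδdef, show (1 : Zm) = ((1 : Multiplicative ℤ) : Zm) from rfl, WithZero.coe_lt_coe]
    exact (by omega : (-1 : ℤ) < 0)
  have hδle : v (c - 1) ≤ δ := lt_one_le_ofAdd_neg_one hc
  -- monotone powers
  have hmono : ∀ {a b : ℕ}, a ≤ b → δ ^ b ≤ δ ^ a := by
    intro a b hab
    obtain ⟨d, rfl⟩ := Nat.exists_eq_add_of_le hab
    rw [pow_add]
    exact mul_le_of_le_one_right' (pow_le_one' hδ1.le d)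
  -- Newton sequence
  set z : ℕ → K := fun k => Nat.rec (1 : K) (fun _ zk => zk - (zk ^ 2 - c) / (2 * zk)) k with hz
  have hz0 : z 0 = 1 := rfl
  have hzs : ∀ k, z (k + 1) = z k - (z k ^ 2 - c) / (2 * z k) := fun k => rfl
  have h2ne : (2 : K) ≠ 0 := by
    intro h; rw [h] at h2; simp [hvdef] at h2
  have key : ∀ k, v (z k - 1) < 1 ∧ v (z k ^ 2 - c) ≤ δ ^ (k + 1) := by
    intro k
    induction k with
    | zero =>
      constructor
      · simp [hz0]
      · rw [hz0, pow_one]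
        calc v (1 ^ 2 - c) = v (c - 1) := by rw [← v.map_neg]; ring_nf
        _ ≤ δ ^ 1 := by rwa [pow_one]
    | succ k ih =>
      obtain ⟨h1, he⟩ := ih
      have hvz : v (z k) = 1 := by
        have hne : v (z k - 1) ≠ v 1 := by rw [v.map_one]; exact h1.ne
        have := v.map_add_of_distinct_val (x := z k - 1) (y := 1) (by rwa [v.map_one] at hne ⊢)
        rw [sub_add_cancel] at this
        rw [this, v.map_one, max_eq_right h1.le]
      have hzne : z k ≠ 0 := by
        intro h; rw [h] at hvz; simp at hvz
      have halg : z (k+1) ^ 2 - c = (z k ^ 2 - c) ^ 2 / (2 * z k) ^ 2 := by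
        rw [hzs]; field_simp; ring
      have hveq : v (z (k+1) ^ 2 - c) = v (z k ^ 2 - c) ^ 2 := by
        rw [halg, v.map_div, v.map_pow, v.map_pow, v.map_mul, h2, hvz, one_mul, one_pow, div_one]
      constructor
      · have hrw : z (k+1) - 1 = (z k - 1) - (z k ^ 2 - c) / (2 * z k) := by
          rw [hzs]; ring
        rw [hrw]
        refine lt_of_le_of_lt (v.map_sub _ _) (max_lt ?_ ?_)
        · exact h1
        · rw [v.map_div, v.map_mul, h2, hvz, one_mul, div_one]
          calc v (z k ^ 2 - c) ≤ δ ^ (k+1) := he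
          _ ≤ δ ^ 1 := hmono (by omega)
          _ < 1 := by rwa [pow_one]
      · rw [hveq]
        calc v (z k ^ 2 - c) ^ 2 ≤ (δ ^ (k+1)) ^ 2 := pow_le_pow_left' he 2
        _ = δ ^ (k+2) * δ ^ k := by rw [← pow_mul, ← pow_add]; congr 1; ring
        _ ≤ δ ^ (k+2) * 1 := mul_le_mul_right (pow_le_one' hδ1.le k) _
        _ = δ ^ (k+2) := mul_one _
  -- consecutive differences
  have hdiff : ∀ k, v (z (k+1) - z k) ≤ δ ^ (k+1) := by
    intro k
    obtain ⟨h1, he⟩ := key k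
    have hvz : v (z k) = 1 := by
      have := v.map_add_of_distinct_val (x := z k - 1) (y := 1)
        (by rw [v.map_one]; exact h1.ne)
      rw [sub_add_cancel] at this
      rw [this, v.map_one, max_eq_right h1.le]
    rw [hzs, sub_sub_cancel_left, v.map_neg, v.map_div, v.map_mul, h2, hvz, one_mul, div_one]
    exact he
  -- telescoping
  have htel : ∀ i j, i ≤ j → v (z j - z i) ≤ δ ^ (i+1) := by
    intro i j hij
    induction j with
    | zero => interval_cases i; simp
    | succ j ihj =>
      rcases Nat.lt_or_ge i (j+1) with h | h
      · have hij' : i ≤ j := by omega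
        calc v (z (j+1) - z i) = v ((z (j+1) - z j) + (z j - z i)) := by congr 1; ring
        _ ≤ max (v (z (j+1) - z j)) (v (z j - z i)) := v.map_add _ _
        _ ≤ δ ^ (i+1) := max_le ((hdiff j).trans (hmono (by omega))) (ihj hij')
      · have : i = j + 1 := by omega
        subst this; simp
  -- Cauchy
  have hcau : CauchySeq z := by
    rw [(Valued.hasBasis_uniformity K Zm).cauchySeq_iff]
    intro γ _
    obtain ⟨N, hN⟩ := pow_lt_unit_eventually (Units.map (MonoidWithZeroHom.ValueGroup₀.embedding (f := (.ofClass v))) γ)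
    refine ⟨N, fun m hm n hn => ?_⟩
    show v.restrict (z n - z m) < γ.1; rw [Valuation.restrict_lt_iff_lt_embedding]
    rcases le_total m n with h | h
    · exact lt_of_le_of_lt ((htel m n h).trans (hmono (by omega))) (hN N le_rfl)
    · rw [← v.map_neg, neg_sub]
      exact lt_of_le_of_lt ((htel n m h).trans (hmono (by omega))) (hN N le_rfl)
  obtain ⟨L, hL⟩ := cauchySeq_tendsto_of_complete hcau
  have ht1 : Filter.Tendsto (fun k => z k ^ 2 - c) Filter.atTop (nhds (L ^ 2 - c)) :=
    (hL.pow 2).sub tendsto_const_nhds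
  have ht0 : Filter.Tendsto (fun k => z k ^ 2 - c) Filter.atTop (nhds 0) := by
    rw [(Valued.hasBasis_nhds_zero K Zm).tendsto_right_iff]
    intro γ _
    obtain ⟨N, hN⟩ := pow_lt_unit_eventually (Units.map (MonoidWithZeroHom.ValueGroup₀.embedding (f := (.ofClass v))) γ)
    filter_upwards [Filter.eventually_ge_atTop N] with k hk
    show v.restrict (z k ^ 2 - c) < γ.1; rw [Valuation.restrict_lt_iff_lt_embedding]
    exact lt_of_le_of_lt ((key k).2.trans (hmono (by omega))) (hN N le_rfl)
  have hL2 : L ^ 2 - c = 0 := tendsto_nhds_unique ht1 ht0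
  have hc2 : c = L ^ 2 := (sub_eq_zero.mp hL2).symm
  exact ⟨L, by rw [hc2, sq]⟩


lemma val_two_eq_one (p : ℕ) [hpp : Fact p.Prime] (hp : Odd p) (K : Type) [Field K]
    (ψ : ℚ_[p] →+* K) (v : Valuation K Zm) : v (2 : K) = 1 := by
  have hp2 : p ≠ 2 := by rintro rfl; exact (Nat.not_odd_iff_even.mpr even_two) hp
  have hpnd2 : ∀ m : ℕ, ¬ (p:ℤ) ∣ (2:ℤ) ^ m := by
    intro m h
    have h2 := Int.Prime.dvd_pow hpp.out h
    norm_num at h2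
    exact hp2 ((Nat.prime_dvd_prime_iff_eq hpp.out Nat.prime_two).mp h2)
  -- Fermat: p ∣ 2^(p-1) - 1
  have hdvd : (p:ℤ) ∣ 2 ^ (p - 1) - 1 := by
    rw [← ZMod.intCast_zmod_eq_zero_iff_dvd]
    push_cast
    rw [sub_eq_zero]
    have h2z : (2 : ZMod p) ≠ 0 := by
      intro h
      rw [show (2 : ZMod p) = ((2:ℤ) : ZMod p) by push_cast; ring] at h
      exact hpnd2 1 (by simpa using (ZMod.intCast_zmod_eq_zero_iff_dvd 2 p).mp (by simpa using h))
    exact ZMod.pow_card_sub_one_eq_one h2z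
  set u : ℤ_[p] := (2:ℤ_[p]) ^ (p - 1) with hu
  have hnu : ‖u - 1‖ < 1 := by
    have : u - 1 = (((2:ℤ) ^ (p-1) - 1 : ℤ) : ℤ_[p]) := by push_cast [hu]; ring
    rw [this, PadicInt.norm_int_lt_one_iff_dvd]
    exact hdvd
  -- for each m, a 2^m-th root of u
  have hroot : ∀ m : ℕ, ∃ z : ℤ_[p], z ^ (2 ^ m) = u := by
    intro m
    set f : Polynomial ℤ_[p] := X ^ (2 ^ m) - C u with hf
    have heval : f.eval 1 = 1 - u := by simp [hf]
    have hderiv : (derivative f).eval 1 = ((2 ^ m : ℕ) : ℤ_[p]) := by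
      simp [hf, derivative_X_pow]
    have hnd : ‖(derivative f).eval 1‖ = 1 := by
      rw [hderiv]
      have hle := PadicInt.norm_le_one ((2 ^ m : ℕ) : ℤ_[p])
      have hnlt : ¬ ‖((2 ^ m : ℕ) : ℤ_[p])‖ < 1 := by
        rw [show (((2 ^ m : ℕ) : ℤ_[p])) = (((2:ℤ)^m : ℤ) : ℤ_[p]) by push_cast; ring,
          PadicInt.norm_int_lt_one_iff_dvd]
        exact hpnd2 m
      exact le_antisymm hle (not_lt.mp hnlt)
    have hnorm : ‖f.eval 1‖ < ‖(derivative f).eval 1‖ ^ 2 := by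
      rw [hnd, one_pow, heval, show (1:ℤ_[p]) - u = -(u - 1) by ring, norm_neg]
      exact hnu
    obtain ⟨z, hz, -⟩ := hensels_lemma hnorm
    refine ⟨z, ?_⟩
    have : z ^ 2 ^ m - u = 0 := by simpa [hf] using hz
    exact sub_eq_zero.mp this
  -- transfer to K
  set θ : ℤ_[p] →+* K := ψ.comp PadicInt.Coe.ringHom with hθ
  have h2K : (2 : K) ≠ 0 := by
    have : (2 : K) = ψ (2 : ℚ_[p]) := by rw [map_ofNat]
    rw [this]
    simpa using (map_ne_zero ψ).mpr (two_ne_zero : (2:ℚ_[p]) ≠ 0)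
  have hv2 : v (2 : K) ≠ 0 := (Valuation.ne_zero_iff v).mpr h2K
  obtain ⟨a, ha⟩ := WithZero.ne_zero_iff_exists.mp hv2
  -- key divisibility for all m
  have hdiv : ∀ m : ℕ, ∃ β : ℤ, ((p - 1 : ℕ) : ℤ) * toAdd a = 2 ^ m * β := by
    intro m
    obtain ⟨z, hz⟩ := hroot m
    have hzK : (θ z) ^ (2 ^ m) = (2 : K) ^ (p - 1) := by
      rw [← map_pow, hz, hu, map_pow]
      congr 1
      rw [map_ofNat]
    have hθzne : θ z ≠ 0 := by
      intro h
      rw [h, zero_pow (by positivity)] at hzK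
      exact (pow_ne_zero _ h2K) hzK.symm
    have hvzne : v (θ z) ≠ 0 := (Valuation.ne_zero_iff v).mpr hθzne
    obtain ⟨b, hb⟩ := WithZero.ne_zero_iff_exists.mp hvzne
    have hval : v (θ z) ^ (2 ^ m) = v (2 : K) ^ (p - 1) := by
      rw [← v.map_pow, ← v.map_pow, hzK]
    rw [← ha, ← hb, ← WithZero.coe_pow, ← WithZero.coe_pow, WithZero.coe_inj] at hval
    have := congrArg toAdd hval
    rw [toAdd_pow, toAdd_pow, nsmul_eq_mul, nsmul_eq_mul] at this
    exact ⟨toAdd b, by push_cast at this ⊢; linarith [this]⟩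
  -- conclude toAdd a = 0
  have hza : ((p - 1 : ℕ) : ℤ) * toAdd a = 0 := by
    by_contra h
    set x : ℤ := ((p - 1 : ℕ) : ℤ) * toAdd a with hx
    obtain ⟨β, hβ⟩ := hdiv x.natAbs
    have hdvd2 : (2:ℤ) ^ x.natAbs ∣ x := ⟨β, hβ⟩
    have hle := Int.le_of_dvd (abs_pos.mpr h) ((dvd_abs ((2:ℤ)^x.natAbs) x).mpr hdvd2)
    have hlt : (x.natAbs : ℤ) < 2 ^ x.natAbs := by exact_mod_cast Nat.lt_two_pow_self (n := x.natAbs)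
    rw [Int.abs_eq_natAbs] at hle
    omega
  have hane : ((p - 1 : ℕ) : ℤ) ≠ 0 := by
    have := hpp.out.two_le; omega
  have hta : toAdd a = 0 := by
    rcases mul_eq_zero.mp hza with h | h
    · exact absurd h hane
    · exact h
  have ha1 : a = 1 := by
    have : a = ofAdd (0:ℤ) := by rw [← hta]; rfl
    simpa using this
  rw [← ha, ha1]; rfl


lemma val_natCast_le_one {K : Type} [Field K] (v : Valuation K Zm) (n : ℕ) : v n ≤ 1 := by
  induction n with
  | zero => simp
  | succ n ih =>
    push_cast
    exact le_trans (v.map_add _ _) (max_le ih (le_of_eq v.map_one))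

/-- Let `p` be an odd prime, `E` the elliptic curve `y² = x(1-x)(x-p)` over `ℚ_p`,
`F = ℚ_p(E)` its function field (the quadratic extension of `ℚ_p(x)` generated by `y`),
and `v` a nontrivial rank-one discrete valuation on `F` (value group `ℤ`; here written
multiplicatively, with values in `ℤₘ₀ = WithZero (Multiplicative ℤ)` and `v` surjective),
with completion `F_v` (a complete valued field containing `F` as a dense subfield, whose
valuation extends `v`).  If `v(1-x) < 0` (multiplicatively: `v(1-x) > 1`), then `1 - x`
is a square in `F_v`. -/
theorem one_sub_x_square_in_completion_of_neg_val
    (p : ℕ) [Fact p.Prime] (hp : Odd p)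
    (F : Type) [Field F] [Algebra (RatFunc ℚ_[p]) F]
    (y : F)
    (hy : y ^ 2 = algebraMap (RatFunc ℚ_[p]) F
      (RatFunc.X * (1 - RatFunc.X) * (RatFunc.X - RatFunc.C (p : ℚ_[p]))))
    (hgen : Algebra.adjoin (RatFunc ℚ_[p]) {y} = ⊤)
    (hdeg : Module.finrank (RatFunc ℚ_[p]) F = 2)
    (v : Valuation F (WithZero (Multiplicative ℤ)))
    (hv : Function.Surjective v)
    (Fv : Type) [Field Fv] [Valued Fv (WithZero (Multiplicative ℤ))] [CompleteSpace Fv]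
    [Algebra F Fv]
    (hcompat : ∀ f : F, Valued.v (algebraMap F Fv f) = v f)
    (hdense : DenseRange (algebraMap F Fv))
    (hneg : 1 < v (algebraMap (RatFunc ℚ_[p]) F (1 - RatFunc.X))) :
    IsSquare (algebraMap F Fv (algebraMap (RatFunc ℚ_[p]) F (1 - RatFunc.X))) := by
  set φ : RatFunc ℚ_[p] →+* F := (algebraMap (RatFunc ℚ_[p]) F : RatFunc ℚ_[p] →+* F) with hφ
  set A : F →+* Fv := (algebraMap F Fv : F →+* Fv) with hA
  set xF : F := φ RatFunc.X with hxF
  have hφ1x : algebraMap (RatFunc ℚ_[p]) F (1 - RatFunc.X) = 1 - xF := by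
    rw [hxF, hφ, map_sub, map_one]
  rw [hφ1x] at hneg ⊢
  -- valuation bookkeeping
  have hvx : v xF = v (1 - xF) := by
    have hne : v (1:F) ≠ v (-(1 - xF)) := by
      rw [v.map_one, v.map_neg]; exact ne_of_lt hneg
    have h := v.map_add_of_distinct_val hne
    have hid : (1:F) + -(1 - xF) = xF := by ring
    rw [hid, v.map_one, v.map_neg, max_eq_right hneg.le] at h
    exact h
  have hvp : v ((p:ℕ) : F) ≤ 1 := val_natCast_le_one v p
  have hvxp : v (xF - (p : F)) = v xF := by
    have hne : v xF ≠ v (-(p:F)) := by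
      rw [v.map_neg, hvx]
      exact fun h => absurd (h ▸ hvp) (not_le.mpr hneg)
    have h := v.map_add_of_distinct_val hne
    have hid : xF + -(p:F) = xF - (p:F) := by ring
    rw [hid, v.map_neg] at h
    rw [h, max_eq_left (le_trans hvp (le_of_lt (hvx ▸ hneg)))]
  have hvx0 : v xF ≠ 0 := by
    rw [hvx]; intro h; rw [h] at hneg; simp at hneg
  have hx0 : xF ≠ 0 := (Valuation.ne_zero_iff v).mp hvx0
  have hxp0 : xF - (p:F) ≠ 0 := (Valuation.ne_zero_iff v).mp (by rw [hvxp]; exact hvx0)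
  -- curve equation in F
  have hy' : y ^ 2 = xF * (1 - xF) * (xF - (p : F)) := by
    rw [hy]
    show φ _ = _
    rw [map_mul, map_mul, map_sub, map_sub, map_one]
    congr 2
    rw [show RatFunc.C ((p:ℕ) : ℚ_[p]) = ((p:ℕ) : RatFunc ℚ_[p]) from map_natCast _ p,
      map_natCast]
  -- the unit close to 1
  set c : F := (xF - (p:F)) / xF with hc
  have hc0 : c ≠ 0 := div_ne_zero hxp0 hx0
  have hvc1 : v (c - 1) < 1 := by
    have hid : c - 1 = -(p:F) / xF := by rw [hc]; field_simp; ring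
    rw [hid, v.map_div, v.map_neg,
      div_lt_iff₀ (zero_lt_iff.mpr hvx0), one_mul]
    exact lt_of_le_of_lt hvp (hvx ▸ hneg)
  have hAc1 : Valued.v (A c - 1) < 1 := by
    rw [show A c - 1 = A (c - 1) by rw [map_sub, map_one], hA]
    rw [show (algebraMap F Fv : F →+* Fv) (c-1) = algebraMap F Fv (c-1) from rfl, hcompat]
    exact hvc1
  have h2Fv : Valued.v (2 : Fv) = 1 := by
    have h2F : v (2 : F) = 1 :=
      val_two_eq_one p hp F (φ.comp (RatFunc.C : ℚ_[p] →+* RatFunc ℚ_[p])) v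
    rw [show (2 : Fv) = algebraMap F Fv (2 : F) from (map_ofNat _ 2).symm, hcompat]
    exact h2F
  obtain ⟨r, hr⟩ := isSquare_of_val_sub_one_lt Fv h2Fv (A c) hAc1
  have hAc0 : A c ≠ 0 := by
    rw [hA]; exact (_root_.map_ne_zero (algebraMap F Fv)).mpr hc0
  have hr0 : r ≠ 0 := by
    intro h; rw [h, mul_zero] at hr; exact hAc0 hr
  -- key identity
  have hkey : (1 - xF) * c = (y / xF) ^ 2 := by
    rw [hc]; field_simp; linear_combination -hy'
  refine ⟨A (y / xF) * r⁻¹, ?_⟩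
  have hAx0 : A xF ≠ 0 := by rw [hA]; exact (_root_.map_ne_zero _).mpr hx0
  have hAc := congrArg A hkey
  rw [map_mul, map_pow, hr, map_sub, map_one, map_div₀] at hAc
  rw [map_sub, map_one, map_div₀]
  field_simp
  field_simp at hAc
  linear_combination hAc
end
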